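/- arXiv:1401.8037 — 7 statements merged into one kernel-verified Lean document; each statement's English description precedes it below -/
import Mathlib

section
/- For every integer N ≥ 2 and every nonzero real number u, the series Σ_{ℓ=1}^{∞} p_ℓ^{(N)} (sech u)^ℓ converges absolutely and equals sech(N u). (This is the analytic core of Klebanov's theorem that the normalized random sum (1/N) Σ_{j=1}^{μ_N} L_j of i.i.d. hyperbolic-secant random variables again has the hyperbolic secant distribution.) -/
/-- The probability numbers `p_ℓ^{(N)}`:  `p_0^{(N)} = 0` and for `ℓ ≥ 1`,
`p_ℓ^{(N)} = (1/N) ∑_{k=1}^{N} (-1)^{k+1} sin θ_k cos^{ℓ-1} θ_k` with `θ_k = (2k-1)π/(2N)`. -/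
noncomputable def probNum (N ℓ : ℕ) : ℝ :=
  if ℓ = 0 then 0 else
    (1 / N) * ∑ k ∈ Finset.range N,
      (-1 : ℝ) ^ k * Real.sin ((2 * k + 1) * Real.pi / (2 * N)) *
        Real.cos ((2 * k + 1) * Real.pi / (2 * N)) ^ (ℓ - 1)



open Finset

noncomputable def ang (N k : ℕ) : ℝ := (2 * k + 1) * Real.pi / (2 * N)

noncomputable def eta (N m : ℕ) : ℂ := Complex.exp ((ang N m : ℂ) * Complex.I)

lemma eta_ne (N m : ℕ) : eta N m ≠ 0 := Complex.exp_ne_zero _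

lemma abs_eta (N m : ℕ) : ‖eta N m‖ = 1 := Complex.norm_exp_ofReal_mul_I _

lemma eta_pow (N m p : ℕ) : eta N m ^ p = Complex.exp (((p * ang N m : ℝ) : ℂ) * Complex.I) := by
  rw [eta, ← Complex.exp_nat_mul]
  push_cast
  ring_nf

lemma eta_pow_twoN (N : ℕ) (hN : 0 < N) (m : ℕ) : eta N m ^ (2 * N) = -1 := by
  rw [eta_pow]
  have hN' : (N : ℝ) ≠ 0 := Nat.cast_ne_zero.mpr hN.ne'
  have h1 : ((2 * N : ℕ) * ang N m : ℝ) = (2 * m + 1 : ℕ) * Real.pi := by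
    rw [ang]; push_cast; field_simp
  rw [h1]
  rw [show (((2 * m + 1 : ℕ) * Real.pi : ℝ) : ℂ) * Complex.I
      = (2 * m + 1 : ℕ) * ((Real.pi : ℂ) * Complex.I) by push_cast; ring]
  rw [Complex.exp_nat_mul, Complex.exp_pi_mul_I]
  exact Odd.neg_one_pow ⟨m, by ring⟩

lemma eta_pow_N (N : ℕ) (hN : 0 < N) (k : ℕ) :
    eta N k ^ N = Complex.I * (-1) ^ k := by
  rw [eta_pow]
  have hN' : (N : ℝ) ≠ 0 := Nat.cast_ne_zero.mpr hN.ne'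
  have h1 : ((N : ℕ) * ang N k : ℝ) = (2 * k + 1 : ℕ) * (Real.pi / 2) := by
    rw [ang]; push_cast; field_simp
  rw [h1]
  rw [show (((2 * k + 1 : ℕ) * (Real.pi / 2) : ℝ) : ℂ) * Complex.I
      = (2 * k + 1 : ℕ) * (((Real.pi / 2 : ℝ) : ℂ) * Complex.I) by push_cast; ring]
  rw [Complex.exp_nat_mul]
  have hI : Complex.exp (((Real.pi / 2 : ℝ) : ℂ) * Complex.I) = Complex.I := by
    rw [Complex.exp_mul_I, ← Complex.ofReal_cos, ← Complex.ofReal_sin,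
      Real.cos_pi_div_two, Real.sin_pi_div_two]
    simp
  rw [hI, pow_succ, pow_mul, Complex.I_sq]
  ring

lemma eta_inv (N : ℕ) (hN : 0 < N) (k : ℕ) (hk : k < N) :
    eta N (2 * N - 1 - k) = (eta N k)⁻¹ := by
  have hN' : (N : ℝ) ≠ 0 := Nat.cast_ne_zero.mpr hN.ne'
  have h1 : (2 * N - 1 - k) + (k + 1) = 2 * N := by omega
  have h2 : ((2 * N - 1 - k : ℕ) : ℝ) = 2 * N - 1 - k := by
    have := congrArg (Nat.cast : ℕ → ℝ) h1
    push_cast at this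
    linarith
  have h3 : ang N (2 * N - 1 - k) = 2 * Real.pi - ang N k := by
    rw [ang, ang, h2]; field_simp; ring
  rw [eta, eta, h3]
  rw [show ((2 * Real.pi - ang N k : ℝ) : ℂ) * Complex.I
      = 2 * Real.pi * Complex.I + (-((ang N k : ℂ) * Complex.I)) by push_cast; ring]
  rw [Complex.exp_add, Complex.exp_two_pi_mul_I, one_mul, Complex.exp_neg]

lemma eta_sum_pow (N : ℕ) (hN : 0 < N) (s : ℕ) :
    ∑ m ∈ Finset.range (2 * N), eta N m ^ s =
      if 2 * N ∣ s then (2 * N : ℂ) * (-1) ^ (s / (2 * N)) else 0 := by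
  have hN' : (N : ℝ) ≠ 0 := Nat.cast_ne_zero.mpr hN.ne'
  by_cases hdvd : 2 * N ∣ s
  · obtain ⟨q, hq⟩ := hdvd
    rw [if_pos ⟨q, hq⟩]
    have hterm : ∀ m, eta N m ^ s = (-1 : ℂ) ^ q := by
      intro m
      rw [hq, pow_mul, eta_pow_twoN N hN]
    rw [Finset.sum_congr rfl fun m _ => hterm m, Finset.sum_const, Finset.card_range,
      hq, Nat.mul_div_cancel_left q (by positivity)]
    push_cast; ring
  · rw [if_neg hdvd]
    set r : ℂ := Complex.exp (((s * Real.pi / N : ℝ) : ℂ) * Complex.I) with hr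
    set b : ℂ := Complex.exp (((s * Real.pi / (2 * N) : ℝ) : ℂ) * Complex.I) with hb
    have hterm : ∀ m, eta N m ^ s = b * r ^ m := by
      intro m
      rw [eta_pow, hr, hb, ← Complex.exp_nat_mul, ← Complex.exp_add]
      congr 1
      have : (s : ℝ) * ang N m = s * Real.pi / (2 * N) + m * (s * Real.pi / N) := by
        rw [ang]; field_simp; ring
      rw [show ((s * ang N m : ℝ) : ℂ) * Complex.I
          = ((s * Real.pi / (2 * N) + (m : ℝ) * (s * Real.pi / N) : ℝ) : ℂ) * Complex.I by
            rw [this]]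
      push_cast; ring
    rw [Finset.sum_congr rfl fun m _ => hterm m, ← Finset.mul_sum]
    have hrne : r ≠ 1 := by
      intro hr1
      rw [hr, Complex.exp_eq_one_iff] at hr1
      obtain ⟨n, hn⟩ := hr1
      have hn' : ((s * Real.pi / N : ℝ) : ℂ) = ((n * (2 * Real.pi) : ℝ) : ℂ) := by
        apply mul_right_cancel₀ Complex.I_ne_zero
        rw [hn]; push_cast; ring
      have hreal : (s : ℝ) * Real.pi / N = n * (2 * Real.pi) := Complex.ofReal_inj.mp hn'
      have hpi : Real.pi ≠ 0 := Real.pi_ne_zero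
      have hs : (s : ℝ) = 2 * N * n := by
        apply mul_right_cancel₀ hpi
        field_simp at hreal
        rw [hreal]; ring
      have hsz : (s : ℤ) = 2 * N * n := by exact_mod_cast hs
      exact hdvd (Int.natCast_dvd_natCast.mp ⟨n, by push_cast; linarith [hsz]⟩)
    have hr2N : r ^ (2 * N) = 1 := by
      rw [hr, ← Complex.exp_nat_mul]
      rw [show ((2 * N : ℕ) : ℂ) * (((s * Real.pi / N : ℝ) : ℂ) * Complex.I)
          = (s : ℕ) * (2 * Real.pi * Complex.I) by
            have hNc : (N : ℂ) ≠ 0 := Nat.cast_ne_zero.mpr hN.ne'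
            push_cast
            field_simp]
      rw [Complex.exp_nat_mul, Complex.exp_two_pi_mul_I, one_pow]
    rw [geom_sum_eq hrne, hr2N]
    simp

lemma term_eq (N : ℕ) (hN : 0 < N) (k : ℕ) (u : ℝ) (hu : 0 < u) :
    (((-1 : ℝ) ^ k * Real.sin (ang N k) / (Real.cosh u - Real.cos (ang N k)) : ℝ) : ℂ) =
      (Real.exp u : ℂ) * (eta N k) ^ N / (eta N k - (Real.exp u : ℂ))
      + (Real.exp u : ℂ) * ((eta N k)⁻¹) ^ N / ((eta N k)⁻¹ - (Real.exp u : ℂ)) := by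
  set x : ℂ := (Real.exp u : ℂ) with hxdef
  set e : ℂ := eta N k with hedef
  have he0 : e ≠ 0 := eta_ne N k
  have hx1 : 1 < Real.exp u := by
    calc (1 : ℝ) = Real.exp 0 := Real.exp_zero.symm
    _ < Real.exp u := Real.exp_lt_exp.mpr hu
  have hx0 : x ≠ 0 := by
    simp [hxdef, Complex.ofReal_ne_zero, (Real.exp_pos u).ne']
  have habsx : ‖x‖ = Real.exp u := by
    rw [hxdef, Complex.norm_real, Real.norm_eq_abs, abs_of_pos (Real.exp_pos u)]
  have hex : e - x ≠ 0 := by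
    intro h
    have := congrArg (‖·‖) (sub_eq_zero.mp h)
    rw [abs_eta, habsx] at this
    linarith
  have hex' : e⁻¹ - x ≠ 0 := by
    intro h
    have h2 := congrArg (‖·‖) (sub_eq_zero.mp h)
    rw [norm_inv, abs_eta, habsx] at h2
    simp at h2
    linarith
  -- e and e⁻¹ in terms of cos/sin
  have hE : e = (Real.cos (ang N k) : ℂ) + (Real.sin (ang N k) : ℂ) * Complex.I := by
    rw [hedef, eta, Complex.exp_mul_I, Complex.ofReal_cos, Complex.ofReal_sin]
  have hE' : e⁻¹ = (Real.cos (ang N k) : ℂ) - (Real.sin (ang N k) : ℂ) * Complex.I := by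
    rw [hedef, eta, ← Complex.exp_neg]
    rw [show -((ang N k : ℂ) * Complex.I) = ((-(ang N k) : ℝ) : ℂ) * Complex.I by push_cast; ring]
    rw [Complex.exp_mul_I, Complex.ofReal_cos, Complex.ofReal_sin]
    push_cast
    rw [Complex.cos_neg, Complex.sin_neg]
    ring
  have hcos : (Real.cos (ang N k) : ℂ) = (e + e⁻¹) / 2 := by
    linear_combination (- hE - hE') / 2
  have hsin : (Real.sin (ang N k) : ℂ) = (e⁻¹ - e) * Complex.I / 2 := by
    linear_combination (-(Complex.I) / 2) * hE' + (Complex.I / 2) * hE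
      + (Real.sin (ang N k) : ℂ) * Complex.I_sq
  have hcosh : (Real.cosh u : ℂ) = (x + x⁻¹) / 2 := by
    rw [Real.cosh_eq, Real.exp_neg, Complex.ofReal_div, Complex.ofReal_add,
      Complex.ofReal_inv, hxdef]
    norm_cast
  have heN : e ^ N = Complex.I * (-1) ^ k := eta_pow_N N hN k
  have he2 : e ^ N * e ^ N = -1 := by
    rw [heN]
    rw [show Complex.I * (-1) ^ k * (Complex.I * (-1) ^ k)
        = (Complex.I * Complex.I) * ((-1) ^ k * (-1) ^ k) by ring]
    rw [Complex.I_mul_I, ← pow_add, ← two_mul, pow_mul]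
    norm_num
  have heinvN : (e⁻¹) ^ N = -(e ^ N) := by
    rw [inv_pow]
    rw [inv_eq_of_mul_eq_one_right (a := e ^ N) (by rw [mul_neg, he2]; norm_num)]
  have hdenR : (0 : ℝ) < Real.cosh u - Real.cos (ang N k) := by
    have h1 : 1 < Real.cosh u := Real.one_lt_cosh.mpr hu.ne'
    have h2 : Real.cos (ang N k) ≤ 1 := Real.cos_le_one _
    linarith
  have hden : (Real.cosh u : ℂ) - (Real.cos (ang N k) : ℂ) ≠ 0 := by
    rw [← Complex.ofReal_sub]
    exact Complex.ofReal_ne_zero.mpr hdenR.ne'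
  have hD : (x + x⁻¹) / 2 - (e + e⁻¹) / 2 ≠ 0 := by
    rw [← hcosh, ← hcos]; exact hden
  rw [Complex.ofReal_div, Complex.ofReal_mul, Complex.ofReal_sub, Complex.ofReal_pow,
    Complex.ofReal_neg, Complex.ofReal_one]
  rw [div_add_div _ _ hex hex', div_eq_div_iff hden (mul_ne_zero hex hex')]
  rw [hsin, hcos, hcosh, heinvN, heN]
  field_simp
  ring

lemma key_sum (N : ℕ) (hN : 2 ≤ N) (u : ℝ) (hu : 0 < u) :
    ∑ k ∈ Finset.range N,
        (-1 : ℝ) ^ k * Real.sin (ang N k) / (Real.cosh u - Real.cos (ang N k))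
      = N / Real.cosh (N * u) := by
  have hN0 : 0 < N := by omega
  set x : ℂ := (Real.exp u : ℂ) with hxdef
  have hx1 : 1 < Real.exp u := by
    calc (1 : ℝ) = Real.exp 0 := Real.exp_zero.symm
    _ < Real.exp u := Real.exp_lt_exp.mpr hu
  have hx0 : x ≠ 0 := by
    simp [hxdef, Complex.ofReal_ne_zero, (Real.exp_pos u).ne']
  have habsx : ‖x‖ = Real.exp u := by
    rw [hxdef, Complex.norm_real, Real.norm_eq_abs, abs_of_pos (Real.exp_pos u)]
  have hex : ∀ m, eta N m - x ≠ 0 := by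
    intro m h
    have := congrArg (‖·‖) (sub_eq_zero.mp h)
    rw [abs_eta, habsx] at this
    linarith
  -- the function F
  set F : ℕ → ℂ := fun m => x * (eta N m) ^ N / (eta N m - x) with hF
  -- Step 1: per-m geometric series
  have hgeom : ∀ m, HasSum (fun t : ℕ => -((x⁻¹) ^ t * eta N m ^ (N + t))) (F m) := by
    intro m
    have hnorm : ‖eta N m / x‖ < 1 := by
      rw [norm_div, abs_eta, habsx]
      rw [div_lt_one (by linarith)]
      exact hx1
    have h0 := (hasSum_geometric_of_norm_lt_one hnorm).mul_left (-(eta N m ^ N))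
    have heq : (fun t : ℕ => -(eta N m ^ N) * (eta N m / x) ^ t)
        = fun t : ℕ => -((x⁻¹) ^ t * eta N m ^ (N + t)) := by
      funext t
      rw [div_pow, pow_add]
      ring
    rw [heq] at h0
    convert h0 using 1
    case e'_3 => rfl
    rw [hF]
    have hex2 : x - eta N m ≠ 0 := by
      intro h
      apply hex m
      have : eta N m - x = -(x - eta N m) := by ring
      rw [this, h, neg_zero]
    have h1 : (1 : ℂ) - eta N m / x ≠ 0 := by
      intro h
      have h' : eta N m = x := (div_eq_one_iff_eq hx0).mp (sub_eq_zero.mp h).symm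
      exact hex m (sub_eq_zero.mpr h')
    field_simp [hex m, hex2]
    ring
  -- Step 2: sum over m
  have hsum1 : HasSum
      (fun t : ℕ => ∑ m ∈ Finset.range (2 * N), -((x⁻¹) ^ t * eta N m ^ (N + t)))
      (∑ m ∈ Finset.range (2 * N), F m) := hasSum_sum fun m _ => hgeom m
  -- Step 3: identify the inner finite sums
  set h : ℕ → ℂ := fun t =>
    if 2 * N ∣ (N + t) then -((2 * N : ℂ) * (-1) ^ ((N + t) / (2 * N)) * (x⁻¹) ^ t) else 0
    with hh
  have hfun : (fun t : ℕ => ∑ m ∈ Finset.range (2 * N), -((x⁻¹) ^ t * eta N m ^ (N + t))) = h := by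
    funext t
    have hstep : ∑ m ∈ Finset.range (2 * N), -((x⁻¹) ^ t * eta N m ^ (N + t))
        = -((x⁻¹) ^ t * ∑ m ∈ Finset.range (2 * N), eta N m ^ (N + t)) := by
      rw [Finset.mul_sum, ← Finset.sum_neg_distrib]
    rw [hstep, eta_sum_pow N hN0]
    simp only [hh]
    split_ifs with hdvd
    · ring
    · simp
  -- Step 4: sum h via the injection q ↦ 2Nq + N
  have hphi_inj : Function.Injective (fun q : ℕ => 2 * N * q + N) := by
    intro a b hab
    simp only [] at hab
    have h3 := Nat.add_right_cancel hab
    exact Nat.eq_of_mul_eq_mul_left (by omega) h3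
  have hzero : ∀ t, t ∉ Set.range (fun q : ℕ => 2 * N * q + N) → h t = 0 := by
    intro t ht
    rw [hh]
    simp only []
    rw [if_neg]
    rintro ⟨q, hq⟩
    rcases q with _ | q'
    · omega
    · apply ht
      refine ⟨q', ?_⟩
      show 2 * N * q' + N = t
      have h2 : N + t = N + (2 * N * q' + N) := by rw [hq]; ring
      exact (Nat.add_left_cancel h2).symm
  have hcoshpos : (0 : ℝ) < Real.cosh (N * u) := Real.cosh_pos _
  have hcomp : HasSum (h ∘ fun q : ℕ => 2 * N * q + N)
      ((N : ℂ) / (Real.cosh (N * u) : ℂ)) := by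
    have hxinv : (Real.exp u)⁻¹ < 1 := by
      rw [inv_lt_one_iff₀]
      right; exact hx1
    have hr : ‖-((x⁻¹ : ℂ) ^ (2 * N))‖ < 1 := by
      rw [norm_neg, norm_pow, norm_inv, habsx]
      exact pow_lt_one₀ (by positivity) hxinv (by omega)
    have hne : (1 : ℂ) - (-((x⁻¹) ^ (2 * N))) ≠ 0 := by
      intro hc
      rw [sub_eq_zero] at hc
      rw [← hc] at hr
      simp at hr
    have h0 := (hasSum_geometric_of_norm_lt_one hr).mul_left ((2 * N : ℂ) * (x⁻¹) ^ N)
    have hfe : (fun q : ℕ => ((2 * N : ℂ) * (x⁻¹) ^ N) * (-((x⁻¹) ^ (2 * N))) ^ q)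
        = (h ∘ fun q : ℕ => 2 * N * q + N) := by
      funext q
      have hdvd : 2 * N ∣ N + (2 * N * q + N) := ⟨q + 1, by ring⟩
      have hquot : (N + (2 * N * q + N)) / (2 * N) = q + 1 := by
        have : N + (2 * N * q + N) = 2 * N * (q + 1) := by ring
        rw [this, Nat.mul_div_cancel_left _ (by omega)]
      simp only [Function.comp, hh, if_pos hdvd, hquot]
      rw [pow_succ, pow_add, pow_mul]
      ring
    rw [hfe] at h0
    convert h0 using 1
    case e'_3 => rfl
    have hy : (x : ℂ) ^ N = ((Real.exp (N * u) : ℝ) : ℂ) := by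
      rw [hxdef, ← Complex.ofReal_pow, ← Real.exp_nat_mul]
    have hy0 : (x : ℂ) ^ N ≠ 0 := pow_ne_zero _ hx0
    have hcosh2 : ((Real.cosh (N * u) : ℝ) : ℂ) = (x ^ N + (x ^ N)⁻¹) / 2 := by
      rw [Real.cosh_eq, Real.exp_neg, Complex.ofReal_div, Complex.ofReal_add,
        Complex.ofReal_inv, ← hy]
      norm_cast
    have hsum_ne : (x ^ N + (x ^ N)⁻¹) / 2 ≠ 0 := by
      rw [← hcosh2]
      exact Complex.ofReal_ne_zero.mpr hcoshpos.ne'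
    rw [hcosh2]
    rw [show (x⁻¹ : ℂ) ^ (2 * N) = ((x ^ N) * (x ^ N))⁻¹ by
      rw [inv_pow, ← pow_add, two_mul]]
    rw [show (x⁻¹ : ℂ) ^ N = (x ^ N)⁻¹ from inv_pow x N]
    rw [sub_neg_eq_add]
    have habs2 : 1 < ‖x ^ N * x ^ N‖ := by
      rw [norm_mul, norm_pow, habsx]
      have h1p : 1 < Real.exp u ^ N := one_lt_pow₀ hx1 (by omega)
      nlinarith
    have h1 : x ^ N * x ^ N + 1 ≠ 0 := by
      intro hc
      have : x ^ N * x ^ N = -1 := by linear_combination hc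
      rw [this] at habs2
      simp at habs2
    have h1' : (1 : ℂ) + (x ^ N * x ^ N)⁻¹ = (x ^ N * x ^ N + 1) / (x ^ N * x ^ N) := by
      field_simp
    rw [h1', inv_div]
    field_simp [h1]
  have hhsum : HasSum h ((N : ℂ) / (Real.cosh (N * u) : ℂ)) :=
    (hphi_inj.hasSum_iff hzero).mp hcomp
  rw [hfun] at hsum1
  have hFsum : ∑ m ∈ Finset.range (2 * N), F m = (N : ℂ) / (Real.cosh (N * u) : ℂ) :=
    hsum1.unique hhsum
  -- Step 5: split the sum over 2N into k and its reflection
  have hsplit : ∑ m ∈ Finset.range (2 * N), F m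
      = ∑ k ∈ Finset.range N,
          (F k + x * ((eta N k)⁻¹) ^ N / ((eta N k)⁻¹ - x)) := by
    rw [Finset.sum_add_distrib, two_mul, Finset.sum_range_add]
    congr 1
    rw [← Finset.sum_range_reflect (fun i => F (N + i)) N]
    apply Finset.sum_congr rfl
    intro j hj
    rw [Finset.mem_range] at hj
    have h1 : N + (N - 1 - j) = 2 * N - 1 - j := by omega
    simp only [h1, hF]
    rw [eta_inv N hN0 j hj]
  -- Conclusion
  apply Complex.ofReal_inj.mp
  rw [Complex.ofReal_sum]
  calc ∑ k ∈ Finset.range N,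
        (((-1 : ℝ) ^ k * Real.sin (ang N k) / (Real.cosh u - Real.cos (ang N k)) : ℝ) : ℂ)
      = ∑ k ∈ Finset.range N, (F k + x * ((eta N k)⁻¹) ^ N / ((eta N k)⁻¹ - x)) := by
        apply Finset.sum_congr rfl
        intro k _
        rw [hF]
        exact term_eq N hN0 k u hu
    _ = ∑ m ∈ Finset.range (2 * N), F m := hsplit.symm
    _ = (N : ℂ) / (Real.cosh (N * u) : ℂ) := hFsum
    _ = ((N / Real.cosh (N * u) : ℝ) : ℂ) := by push_cast; ring


lemma klebanov_aux (N : ℕ) (hN : 2 ≤ N) (u : ℝ) (hu : 0 < u) :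
    Summable (fun ℓ : ℕ => |probNum N ℓ * (1 / Real.cosh u) ^ ℓ|) ∧
    ∑' ℓ : ℕ, probNum N ℓ * (1 / Real.cosh u) ^ ℓ = 1 / Real.cosh (N * u) := by
  have hN0 : 0 < N := by omega
  have hNr : (0 : ℝ) < N := by exact_mod_cast hN0
  set z : ℝ := 1 / Real.cosh u with hz
  have hcosh1 : 1 < Real.cosh u := Real.one_lt_cosh.mpr hu.ne'
  have hcosh0 : (0 : ℝ) < Real.cosh u := by linarith
  have hz0 : 0 < z := by rw [hz]; positivity
  have hz1 : z < 1 := by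
    rw [hz, div_lt_one hcosh0]
    linarith
  set f : ℕ → ℕ → ℝ := fun k ℓ => if ℓ = 0 then 0 else
    (1 / N) * ((-1) ^ k * Real.sin (ang N k)) * (Real.cos (ang N k)) ^ (ℓ - 1) * z ^ ℓ
    with hf
  have hq : ∀ ℓ, probNum N ℓ * z ^ ℓ = ∑ k ∈ Finset.range N, f k ℓ := by
    intro ℓ
    rcases Nat.eq_zero_or_pos ℓ with h0 | h0
    · subst h0; simp [probNum, hf]
    · have hne : ℓ ≠ 0 := h0.ne'
      simp only [probNum, hf, if_neg hne, ang]
      rw [Finset.mul_sum, Finset.sum_mul]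
      exact Finset.sum_congr rfl fun k _ => by ring
  have hshift : ∀ k, (fun n : ℕ => f k (n + 1))
      = fun n : ℕ => ((1 / N) * ((-1) ^ k * Real.sin (ang N k)) * z)
        * (Real.cos (ang N k) * z) ^ n := by
    intro k
    funext n
    simp only [hf, if_neg (Nat.succ_ne_zero n), Nat.add_sub_cancel]
    rw [mul_pow, pow_succ]
    ring
  have hnorm : ∀ k, ‖Real.cos (ang N k) * z‖ < 1 := by
    intro k
    rw [Real.norm_eq_abs, abs_mul, abs_of_pos hz0]
    calc |Real.cos (ang N k)| * z ≤ 1 * z := by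
          apply mul_le_mul_of_nonneg_right _ hz0.le
          exact abs_le.mpr ⟨Real.neg_one_le_cos _, Real.cos_le_one _⟩
    _ = z := one_mul z
    _ < 1 := hz1
  have hsummand : ∀ k, Summable (f k) := by
    intro k
    rw [← summable_nat_add_iff 1, hshift k]
    exact (summable_geometric_of_norm_lt_one (hnorm k)).mul_left _
  have hdenpos : ∀ k, (0 : ℝ) < Real.cosh u - Real.cos (ang N k) := by
    intro k
    have := Real.cos_le_one (ang N k)
    linarith
  have htsum_f : ∀ k, ∑' ℓ, f k ℓ
      = (1 / N) * ((-1) ^ k * Real.sin (ang N k)) / (Real.cosh u - Real.cos (ang N k)) := by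
    intro k
    rw [Summable.tsum_eq_zero_add (hsummand k)]
    have h1 : f k 0 = 0 := by simp [hf]
    rw [h1, zero_add, hshift k, tsum_mul_left, tsum_geometric_of_norm_lt_one (hnorm k)]
    have h2 : 1 - Real.cos (ang N k) * z = (Real.cosh u - Real.cos (ang N k)) * z := by
      rw [hz]
      field_simp
    rw [h2]
    rw [mul_inv, ← mul_assoc]
    field_simp [(hdenpos k).ne', hcosh0.ne']
  have habs : Summable (fun ℓ : ℕ => |probNum N ℓ * z ^ ℓ|) := by
    apply Summable.of_nonneg_of_le (fun ℓ => abs_nonneg _) ?_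
      (summable_geometric_of_lt_one hz0.le hz1)
    intro ℓ
    rw [hq]
    calc |∑ k ∈ Finset.range N, f k ℓ|
        ≤ ∑ k ∈ Finset.range N, |f k ℓ| := Finset.abs_sum_le_sum_abs _ _
    _ ≤ ∑ k ∈ Finset.range N, (1 / N) * z ^ ℓ := by
        apply Finset.sum_le_sum
        intro k _
        rcases Nat.eq_zero_or_pos ℓ with h0 | h0
        · subst h0
          simp only [hf, if_pos rfl, abs_zero, pow_zero, mul_one]
          positivity
        · have hne : ℓ ≠ 0 := h0.ne'
          simp only [hf, if_neg hne]
          have habs1 : |(-1 : ℝ) ^ k * Real.sin (ang N k)| ≤ 1 := by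
            rw [abs_mul, abs_pow, abs_neg, abs_one, one_pow, one_mul]
            exact abs_le.mpr ⟨Real.neg_one_le_sin _, Real.sin_le_one _⟩
          have habs2 : |Real.cos (ang N k)| ≤ 1 :=
            abs_le.mpr ⟨Real.neg_one_le_cos _, Real.cos_le_one _⟩
          calc |1 / ↑N * ((-1) ^ k * Real.sin (ang N k)) * Real.cos (ang N k) ^ (ℓ - 1) * z ^ ℓ|
              = (1 / N) * |(-1 : ℝ) ^ k * Real.sin (ang N k)|
                * |Real.cos (ang N k)| ^ (ℓ - 1) * z ^ ℓ := by
                rw [abs_mul, abs_mul, abs_mul, abs_pow, abs_pow]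
                rw [abs_of_nonneg (by positivity : (0:ℝ) ≤ 1 / (N:ℝ)),
                  abs_of_pos hz0]
          _ ≤ (1 / N) * 1 * 1 ^ (ℓ - 1) * z ^ ℓ := by
                gcongr
          _ = (1 / N) * z ^ ℓ := by ring
    _ = (1 / N) * z ^ ℓ * N := by
        rw [Finset.sum_const, Finset.card_range, nsmul_eq_mul]
        ring
    _ = z ^ ℓ := by field_simp
  have hsum : ∑' ℓ : ℕ, probNum N ℓ * z ^ ℓ = 1 / Real.cosh (N * u) := by
    rw [tsum_congr hq, Summable.tsum_finsetSum (fun k _ => hsummand k)]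
    rw [Finset.sum_congr rfl fun k _ => htsum_f k]
    have hstep : ∑ k ∈ Finset.range N,
        (1 / N : ℝ) * ((-1) ^ k * Real.sin (ang N k)) / (Real.cosh u - Real.cos (ang N k))
        = (1 / N) * ∑ k ∈ Finset.range N,
            (-1 : ℝ) ^ k * Real.sin (ang N k) / (Real.cosh u - Real.cos (ang N k)) := by
      rw [Finset.mul_sum]
      apply Finset.sum_congr rfl
      intro k _
      ring
    rw [hstep, key_sum N hN u hu]
    have hcoshN : (0:ℝ) < Real.cosh (N * u) := Real.cosh_pos _
    field_simp
  exact ⟨habs, hsum⟩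

/-- For `N ≥ 2` and `u ≠ 0`, the series `∑_{ℓ≥1} p_ℓ^{(N)} (sech u)^ℓ` converges
absolutely and equals `sech (N u)`.  (Since `p_0^{(N)} = 0`, the sum may be taken
over all `ℓ : ℕ`.) -/
theorem klebanov_sech (N : ℕ) (hN : 2 ≤ N) (u : ℝ) (hu : u ≠ 0) :
    Summable (fun ℓ : ℕ => |probNum N ℓ * (1 / Real.cosh u) ^ ℓ|) ∧
    ∑' ℓ : ℕ, probNum N ℓ * (1 / Real.cosh u) ^ ℓ = 1 / Real.cosh (N * u) := by
  rcases hu.lt_or_gt with h | h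
  · have h1 : Real.cosh u = Real.cosh (-u) := (Real.cosh_neg u).symm
    have h2 : Real.cosh (N * u) = Real.cosh (N * (-u)) := by
      rw [mul_neg, Real.cosh_neg]
    rw [h1, h2]
    exact klebanov_aux N hN (-u) (by linarith)
  · exact klebanov_aux N hN u h
end

section
/- Let N ≥ 1 be an integer and set θ_k^{(N)} = (2k−1)π/(2N) for k = 1,…,N. For every complex number z with 0 < |z| < 1, one has T_N(1/z) ≠ 0 and 1/T_N(1/z) = Σ_{ℓ=1}^{∞} [ (1/N) Σ_{k=1}^{N} (−1)^{k+1} sin(θ_k^{(N)}) cos^{ℓ−1}(θ_k^{(N)}) ] z^ℓ, the series converging absolutely. -/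
open Polynomial Finset

noncomputable def th (N k : ℕ) : ℝ := (2 * k + 1) * Real.pi / (2 * N)

lemma th_pos {N k : ℕ} (hN : 1 ≤ N) : 0 < th N k := by
  unfold th
  have h1 := Real.pi_pos
  have h2 : (0:ℝ) < 2 * N := by exact_mod_cast Nat.mul_pos two_pos hN
  exact div_pos (by positivity) h2

lemma th_lt_pi {N k : ℕ} (hk : k < N) : th N k < Real.pi := by
  unfold th
  have hN : (0:ℝ) < 2 * N := by
    have : 0 < N := hk.trans_le' (Nat.zero_le k) |>.trans_le (le_refl N)
    exact_mod_cast Nat.mul_pos two_pos this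
  rw [div_lt_iff₀ hN]
  have h3 : (2 * k + 1 : ℝ) < 2 * N := by exact_mod_cast (by omega : 2 * k + 1 < 2 * N)
  nlinarith [Real.pi_pos]

lemma cheb_deg : ∀ n : ℕ, (Chebyshev.T ℂ ((n : ℤ) + 1)).natDegree = n + 1 ∧
    (Chebyshev.T ℂ ((n : ℤ) + 1)).leadingCoeff = 2 ^ n
  | 0 => by
    constructor <;> simp [Chebyshev.T_one]
  | 1 => by
    have h2 : ((1:ℕ):ℤ) + 1 = 2 := by norm_num
    rw [h2, Chebyshev.T_two]
    have hd : (2 * X ^ 2 - 1 : ℂ[X]).natDegree = 2 := by compute_degree!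
    refine ⟨hd, ?_⟩
    rw [Polynomial.leadingCoeff, hd]
    simp [Polynomial.coeff_one]
  | (n + 2) => by
    have h1 := cheb_deg n
    have h2 := cheb_deg (n + 1)
    have hidx : ((n + 2 : ℕ) : ℤ) + 1 = ((n:ℤ) + 1) + 2 := by push_cast; ring
    rw [hidx, Chebyshev.T_add_two]
    have hidx2 : ((n:ℤ) + 1) + 1 = ((n + 1 : ℕ) : ℤ) + 1 := by push_cast; ring
    rw [hidx2]
    set Q2 := Chebyshev.T ℂ (((n+1:ℕ):ℤ) + 1) with hQ2
    set Q1 := Chebyshev.T ℂ ((n:ℤ) + 1) with hQ1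
    have hQ2ne : Q2 ≠ 0 := fun h => by simp [h] at h2
    have hQ1ne : Q1 ≠ 0 := fun h => by simp [h] at h1
    have hXne : (2 * X : ℂ[X]) ≠ 0 := by
      intro h
      have := congrArg (fun p => Polynomial.coeff p 1) h
      simp at this
    have hdeg2X : (2 * X : ℂ[X]).natDegree = 1 := by compute_degree!
    have hlc2X : (2 * X : ℂ[X]).leadingCoeff = 2 := by
      rw [Polynomial.leadingCoeff, hdeg2X]; simp
    have hdegP : (2 * X * Q2).natDegree = n + 3 := by
      rw [Polynomial.natDegree_mul hXne hQ2ne, hdeg2X, h2.1]; omega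
    have hlcP : (2 * X * Q2).leadingCoeff = 2 ^ (n + 2) := by
      rw [Polynomial.leadingCoeff_mul, hlc2X, h2.2]; ring
    have hlt : Q1.natDegree < (2 * X * Q2).natDegree := by rw [hdegP, h1.1]; omega
    constructor
    · rw [Polynomial.natDegree_sub_eq_left_of_natDegree_lt hlt, hdegP]
    · rw [Polynomial.leadingCoeff_sub_of_degree_lt (Polynomial.degree_lt_degree hlt), hlcP]

lemma N_mul_th {N k : ℕ} (hN : 1 ≤ N) : (N : ℝ) * th N k = k * Real.pi + Real.pi / 2 := by
  unfold th
  have hN' : (N:ℝ) ≠ 0 := by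
    have : (0:ℝ) < N := by exact_mod_cast hN
    exact this.ne'
  field_simp

lemma cos_N_th {N k : ℕ} (hN : 1 ≤ N) : Real.cos ((N : ℝ) * th N k) = 0 := by
  rw [N_mul_th hN, Real.cos_add, Real.cos_pi_div_two, Real.sin_nat_mul_pi]
  ring

lemma sin_N_th {N k : ℕ} (hN : 1 ≤ N) : Real.sin ((N : ℝ) * th N k) = (-1) ^ k := by
  rw [N_mul_th hN, Real.sin_add, Real.cos_pi_div_two, Real.sin_pi_div_two,
    Real.sin_nat_mul_pi]
  have := Real.cos_nat_mul_pi_sub 0 k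
  simp at this
  rw [this]
  ring

lemma sin_th_pos {N k : ℕ} (hN : 1 ≤ N) (hk : k < N) : 0 < Real.sin (th N k) :=
  Real.sin_pos_of_pos_of_lt_pi (th_pos hN) (th_lt_pi hk)

lemma cos_injOn (N : ℕ) (hN : 1 ≤ N) :
    Set.InjOn (fun k : ℕ => ((Real.cos (th N k) : ℝ) : ℂ)) (Finset.range N) := by
  intro a ha b hb hab
  simp only [Finset.coe_range, Set.mem_Iio] at ha hb
  simp only [] at hab
  have h1 : Real.cos (th N a) = Real.cos (th N b) := by exact_mod_cast hab
  have h2 : th N a = th N b := by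
    apply Real.injOn_cos ⟨(th_pos hN).le, (th_lt_pi ha).le⟩ ⟨(th_pos hN).le, (th_lt_pi hb).le⟩ h1
  have hN' : (0:ℝ) < 2 * N := by exact_mod_cast Nat.mul_pos two_pos hN
  unfold th at h2
  have hπ := Real.pi_pos
  field_simp at h2
  have h3 : (a:ℝ) = b := by linarith
  exact_mod_cast h3

lemma T_root {N k : ℕ} (hN : 1 ≤ N) (hk : k < N) :
    (Chebyshev.T ℂ (N : ℤ)).IsRoot ((Real.cos (th N k) : ℝ) : ℂ) := by
  have h1 : ((Real.cos (th N k) : ℝ) : ℂ) = Complex.cos ((th N k : ℝ) : ℂ) :=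
    Complex.ofReal_cos _
  rw [Polynomial.IsRoot, h1, Chebyshev.T_complex_cos]
  have : ((N : ℤ) : ℂ) * ((th N k : ℝ) : ℂ) = (((N : ℝ) * th N k : ℝ) : ℂ) := by push_cast; ring
  rw [this, ← Complex.ofReal_cos, cos_N_th hN]
  simp

lemma T_factor (N : ℕ) (hN : 1 ≤ N) :
    Chebyshev.T ℂ (N : ℤ) = C ((2:ℂ) ^ (N - 1)) *
      Lagrange.nodal (Finset.range N) (fun k => ((Real.cos (th N k) : ℝ) : ℂ)) := by
  obtain ⟨n, rfl⟩ : ∃ n, N = n + 1 := ⟨N - 1, (Nat.succ_pred_eq_of_pos hN).symm⟩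
  set cc : ℕ → ℂ := fun k => ((Real.cos (th (n + 1) k) : ℝ) : ℂ) with hcc
  set p := Chebyshev.T ℂ ((n + 1 : ℕ) : ℤ) with hp
  have hcast : ((n + 1 : ℕ) : ℤ) = (n : ℤ) + 1 := by push_cast; ring
  have hdeg : p.natDegree = n + 1 := by rw [hp, hcast]; exact (cheb_deg n).1
  have hlc : p.leadingCoeff = 2 ^ n := by rw [hp, hcast]; exact (cheb_deg n).2
  have hpne : p ≠ 0 := fun h => by simp [h] at hlc; exact pow_ne_zero n two_ne_zero hlc.symm
  set m : Multiset ℂ := (Finset.range (n + 1)).val.map cc with hm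
  have hnodup : m.Nodup := Multiset.Nodup.map_on
    (fun x hx y hy hxy => cos_injOn (n + 1) hN (by exact_mod_cast hx) (by exact_mod_cast hy) hxy)
    (Finset.range (n + 1)).nodup
  have hcard : Multiset.card m = n + 1 := by simp [hm]
  have hle : m ≤ p.roots := by
    rw [Multiset.le_iff_count]
    intro a
    by_cases ha : a ∈ m
    · rw [Multiset.count_eq_one_of_mem hnodup ha, Polynomial.count_roots]
      obtain ⟨k, hk, rfl⟩ := Multiset.mem_map.mp ha
      exact (Polynomial.rootMultiplicity_pos hpne).mpr (T_root hN (Finset.mem_range.mp (by exact_mod_cast hk)))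
    · simp [Multiset.count_eq_zero_of_notMem ha]
  have heq : p.roots = m := by
    refine (Multiset.eq_of_le_of_card_le hle ?_).symm
    rw [hcard]
    have h := p.card_roots'
    rw [hdeg] at h
    exact h
  have hmain := Polynomial.C_leadingCoeff_mul_prod_multiset_X_sub_C (p := p) (by rw [heq, hcard, hdeg])
  rw [← hmain, hlc, heq, hm, Multiset.map_map, Lagrange.nodal,
    Finset.prod_eq_multiset_prod]
  norm_num

lemma deriv_val {N k : ℕ} (hN : 1 ≤ N) (hk : k < N) :
    ((2:ℂ) ^ (N - 1)) * (∏ j ∈ (Finset.range N).erase k,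
        (((Real.cos (th N k) : ℝ) : ℂ) - ((Real.cos (th N j) : ℝ) : ℂ))) *
      ((Real.sin (th N k) : ℝ) : ℂ) = (N : ℂ) * (-1) ^ k := by
  set cc : ℕ → ℂ := fun k => ((Real.cos (th N k) : ℝ) : ℂ) with hcc
  have hfac := T_factor N hN
  have hder := congrArg derivative hfac
  rw [Chebyshev.T_derivative_eq_U, Polynomial.derivative_C_mul] at hder
  have hev := congrArg (Polynomial.eval (cc k)) hder
  rw [Polynomial.eval_mul, Polynomial.eval_mul, Polynomial.eval_C,
    Lagrange.eval_nodal_derivative_eval_node_eq (Finset.mem_range.mpr hk),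
    Lagrange.eval_nodal] at hev
  -- hev : eval (cc k) ↑N * eval (cc k) (U ℂ (N-1)) = 2^(N-1) * ∏ ...
  have hU : (Polynomial.eval (cc k) (Chebyshev.U ℂ ((N : ℤ) - 1))) *
      Complex.sin ((th N k : ℝ) : ℂ) = ((-1 : ℂ)) ^ k := by
    have h1 : cc k = Complex.cos ((th N k : ℝ) : ℂ) := Complex.ofReal_cos _
    rw [h1, Chebyshev.U_complex_cos]
    have h2 : (((((N : ℤ) - 1 : ℤ)) : ℂ) + 1) * ((th N k : ℝ) : ℂ) =
        (((N : ℝ) * th N k : ℝ) : ℂ) := by push_cast; ring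
    rw [h2, ← Complex.ofReal_sin, sin_N_th hN]
    push_cast
    ring
  have := congrArg (· * Complex.sin ((th N k : ℝ) : ℂ)) hev
  simp only [Polynomial.eval_intCast] at this hev
  calc ((2:ℂ) ^ (N - 1)) * (∏ j ∈ (Finset.range N).erase k, (cc k - cc j)) *
        ((Real.sin (th N k) : ℝ) : ℂ)
      = (((N:ℤ):ℂ) * Polynomial.eval (cc k) (Chebyshev.U ℂ ((N : ℤ) - 1))) *
        Complex.sin ((th N k : ℝ) : ℂ) := by
        rw [hev]; rw [Complex.ofReal_sin]
    _ = (N : ℂ) * ((Polynomial.eval (cc k) (Chebyshev.U ℂ ((N : ℤ) - 1))) *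
        Complex.sin ((th N k : ℝ) : ℂ)) := by push_cast; ring
    _ = (N : ℂ) * (-1) ^ k := by rw [hU]

open Polynomial Chebyshev in
/-- For `0 < |z| < 1`, `T_N(1/z) ≠ 0` and
`1/T_N(1/z) = ∑_{ℓ=1}^∞ [(1/N) ∑_{k=1}^N (-1)^{k+1} sin θ_k cos^{ℓ-1} θ_k] z^ℓ`,
the series converging absolutely (indexed here by `ℓ = j + 1`, `j : ℕ`). -/
theorem one_div_chebyshevT_eq_tsum (N : ℕ) (hN : 1 ≤ N) (z : ℂ)
    (hz0 : 0 < ‖z‖) (hz1 : ‖z‖ < 1) :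
    (Polynomial.Chebyshev.T ℂ N).eval (1 / z) ≠ 0 ∧
    Summable (fun j : ℕ =>
      ‖((((1 : ℝ) / N) * ∑ k ∈ Finset.range N,
          (-1 : ℝ) ^ k * Real.sin ((2 * k + 1) * Real.pi / (2 * N)) *
            Real.cos ((2 * k + 1) * Real.pi / (2 * N)) ^ j : ℝ) : ℂ) * z ^ (j + 1)‖) ∧
    1 / (Polynomial.Chebyshev.T ℂ N).eval (1 / z) =
      ∑' j : ℕ,
        ((((1 : ℝ) / N) * ∑ k ∈ Finset.range N,
          (-1 : ℝ) ^ k * Real.sin ((2 * k + 1) * Real.pi / (2 * N)) *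
            Real.cos ((2 * k + 1) * Real.pi / (2 * N)) ^ j : ℝ) : ℂ) * z ^ (j + 1) := by
  have hth : ∀ k : ℕ, (2 * (k:ℝ) + 1) * Real.pi / (2 * (N:ℝ)) = th N k := fun k => rfl
  simp only [hth]
  set cc : ℕ → ℂ := fun k => ((Real.cos (th N k) : ℝ) : ℂ) with hcc
  set lc : ℂ := (2:ℂ) ^ (N - 1) with hlc
  set w : ℂ := 1 / z with hw
  have hzne : z ≠ 0 := by
    intro h; rw [h] at hz0; simp at hz0
  have hNne : (N : ℂ) ≠ 0 := Nat.cast_ne_zero.mpr (by omega)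
  have hlcne : lc ≠ 0 := pow_ne_zero _ two_ne_zero
  -- |cc k| ≤ 1 < |w|
  have hccabs : ∀ k, ‖cc k‖ ≤ 1 := by
    intro k
    rw [hcc]
    simp only [Complex.norm_real, Real.norm_eq_abs]
    exact Real.abs_cos_le_one _
  have hwabs : 1 < ‖w‖ := by
    rw [hw, norm_div, norm_one]
    exact (one_lt_div hz0).mpr hz1
  have hfk : ∀ k, w - cc k ≠ 0 := by
    intro k h
    have : w = cc k := by linear_combination h
    rw [this] at hwabs
    exact absurd (hccabs k) (not_le.mpr hwabs)
  -- evaluation of T at w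
  have heval : (Chebyshev.T ℂ (N:ℤ)).eval w = lc * ∏ j ∈ Finset.range N, (w - cc j) := by
    rw [T_factor N hN, Polynomial.eval_mul, Polynomial.eval_C, Lagrange.eval_nodal]
  have hProdne : (∏ j ∈ Finset.range N, (w - cc j)) ≠ 0 :=
    Finset.prod_ne_zero_iff.mpr fun j _ => hfk j
  have hevalne : (Chebyshev.T ℂ (N:ℤ)).eval w ≠ 0 := by
    rw [heval]; exact mul_ne_zero hlcne hProdne
  refine ⟨hevalne, ?_, ?_⟩
  · -- summability of stated series
    have hble : ∀ j : ℕ, ‖((((1 : ℝ) / N) * ∑ k ∈ Finset.range N,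
          (-1 : ℝ) ^ k * Real.sin (th N k) * Real.cos (th N k) ^ j : ℝ) : ℂ) * z ^ (j + 1)‖
          ≤ ‖z‖ * ‖z‖ ^ j := by
      intro j
      rw [norm_mul, Complex.norm_real, norm_pow]
      have h1 : ‖(((1 : ℝ) / N) * ∑ k ∈ Finset.range N,
          (-1 : ℝ) ^ k * Real.sin (th N k) * Real.cos (th N k) ^ j : ℝ)‖ ≤ 1 := by
        rw [Real.norm_eq_abs, abs_mul]
        have h2 : |∑ k ∈ Finset.range N,
            (-1 : ℝ) ^ k * Real.sin (th N k) * Real.cos (th N k) ^ j| ≤ N := by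
          calc _ ≤ ∑ k ∈ Finset.range N, |(-1 : ℝ) ^ k * Real.sin (th N k) * Real.cos (th N k) ^ j| :=
                Finset.abs_sum_le_sum_abs _ _
            _ ≤ ∑ k ∈ Finset.range N, 1 := by
                apply Finset.sum_le_sum
                intro k _
                rw [abs_mul, abs_mul, abs_pow, abs_pow, abs_neg, abs_one, one_pow, one_mul]
                calc |Real.sin (th N k)| * |Real.cos (th N k)| ^ j
                    ≤ 1 * 1 ^ j := by
                      apply mul_le_mul (Real.abs_sin_le_one _)
                        (pow_le_pow_left₀ (abs_nonneg _) (Real.abs_cos_le_one _) j)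
                        (by positivity) zero_le_one
                  _ = 1 := by norm_num
            _ = N := by simp
        have hNR : (0:ℝ) < N := by exact_mod_cast hN
        calc |(1:ℝ)/N| * |∑ k ∈ Finset.range N, (-1:ℝ)^k * Real.sin (th N k) * Real.cos (th N k) ^ j|
            ≤ (1/N) * N := by
              apply mul_le_mul (le_of_eq (abs_of_pos (by positivity))) h2 (abs_nonneg _)
                (by positivity)
          _ = 1 := by field_simp
      calc _ ≤ 1 * ‖z‖ ^ (j+1) := by
            apply mul_le_mul_of_nonneg_right h1 (by positivity)
        _ = ‖z‖ * ‖z‖ ^ j := by ring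
    apply Summable.of_nonneg_of_le (fun _ => norm_nonneg _) hble
    exact (summable_geometric_of_lt_one (norm_nonneg z) hz1).mul_left _
  · -- the series identity
    set A : ℕ → ℂ := fun k => ((Real.sin (th N k) : ℝ) : ℂ) * (-1) ^ k / N with hA
    set D : ℕ → ℂ := fun k => ∏ j ∈ (Finset.range N).erase k, (cc k - cc j) with hD
    set P : ℂ := ∏ j ∈ Finset.range N, (w - cc j) with hP
    have hsinne : ∀ k ∈ Finset.range N, ((Real.sin (th N k) : ℝ) : ℂ) ≠ 0 := by
      intro k hk
      have := sin_th_pos hN (Finset.mem_range.mp hk)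
      exact_mod_cast this.ne'
    have hkey : ∀ k ∈ Finset.range N, lc * D k * ((Real.sin (th N k) : ℝ) : ℂ)
        = (N : ℂ) * (-1) ^ k := fun k hk => deriv_val hN (Finset.mem_range.mp hk)
    have hlcDne : ∀ k ∈ Finset.range N, lc * D k ≠ 0 := by
      intro k hk h0
      have h := hkey k hk
      rw [h0, zero_mul] at h
      exact (mul_ne_zero hNne (pow_ne_zero _ (neg_ne_zero.mpr one_ne_zero))) h.symm
    have hDne : ∀ k ∈ Finset.range N, D k ≠ 0 := by
      intro k hk
      exact right_ne_zero_of_mul (hlcDne k hk)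
    have hAinv : ∀ k ∈ Finset.range N, (lc * D k)⁻¹ = A k := by
      intro k hk
      have h := hkey k hk
      have he : ((-1:ℂ)) ^ k * (-1) ^ k = 1 := by
        rw [← mul_pow]; norm_num
      refine inv_eq_of_mul_eq_one_left ?_
      calc A k * (lc * D k) = (lc * D k * ((Real.sin (th N k) : ℝ) : ℂ)) * (-1)^k / N := by
            rw [hA]; ring
        _ = ((N:ℂ) * (-1)^k) * (-1)^k / N := by rw [h]
        _ = (N:ℂ) * ((-1)^k * (-1)^k) / N := by ring
        _ = 1 := by rw [he]; field_simp
    have hterm : ∀ k ∈ Finset.range N,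
        Polynomial.eval w (Lagrange.basis (Finset.range N) cc k)
          = A k * (w - cc k)⁻¹ * (lc * P) := by
      intro k hk
      have h1 : Polynomial.eval w (Lagrange.basis (Finset.range N) cc k)
          = (D k)⁻¹ * ∏ j ∈ (Finset.range N).erase k, (w - cc j) := by
        simp only [Lagrange.basis, Polynomial.eval_prod, Lagrange.basisDivisor,
          Polynomial.eval_mul, Polynomial.eval_C, Polynomial.eval_sub, Polynomial.eval_X]
        rw [Finset.prod_mul_distrib, hD, ← Finset.prod_inv_distrib]
      rw [h1, ← hAinv k hk, hP, ← Finset.mul_prod_erase _ _ hk]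
      have h2 := hfk k
      have h3 := hDne k hk
      field_simp
    have hpf : (lc * P)⁻¹ = ∑ k ∈ Finset.range N, A k * (w - cc k)⁻¹ := by
      have hb := congrArg (Polynomial.eval w)
        (Lagrange.sum_basis (cos_injOn N hN) ⟨0, Finset.mem_range.mpr (by omega)⟩)
      rw [Polynomial.eval_finset_sum, Polynomial.eval_one] at hb
      rw [Finset.sum_congr rfl hterm, ← Finset.sum_mul] at hb
      exact inv_eq_of_mul_eq_one_left hb
    have hgsum : ∀ k, Summable (fun j : ℕ => cc k ^ j * z ^ (j + 1)) := by
      intro k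
      have habs : ‖cc k * z‖ < 1 := by
        rw [norm_mul]
        calc ‖cc k‖ * ‖z‖ ≤ 1 * ‖z‖ :=
              mul_le_mul_of_nonneg_right (hccabs k) (norm_nonneg z)
          _ < 1 := by rw [one_mul]; exact hz1
      have heq2 : (fun j : ℕ => cc k ^ j * z ^ (j + 1)) = fun j => z * (cc k * z) ^ j := by
        funext j; rw [mul_pow]; ring
      rw [heq2]
      exact (summable_geometric_of_norm_lt_one habs).mul_left z
    have hgeo : ∀ k, (w - cc k)⁻¹ = ∑' j : ℕ, cc k ^ j * z ^ (j + 1) := by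
      intro k
      have habs : ‖cc k * z‖ < 1 := by
        rw [norm_mul]
        calc ‖cc k‖ * ‖z‖ ≤ 1 * ‖z‖ :=
              mul_le_mul_of_nonneg_right (hccabs k) (norm_nonneg z)
          _ < 1 := by rw [one_mul]; exact hz1
      have h1mz : (1 : ℂ) - cc k * z ≠ 0 := by
        intro h0
        have : cc k * z = 1 := by linear_combination -h0
        rw [← norm_one (α := ℂ), ← this] at habs
        exact lt_irrefl _ habs
      have hwk : w - cc k = (1 - cc k * z) / z := by
        rw [hw]; field_simp
      rw [hwk, inv_div, div_eq_mul_inv, ← tsum_geometric_of_norm_lt_one habs,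
        ← tsum_mul_left]
      exact tsum_congr fun j => by rw [mul_pow]; ring
    rw [one_div, heval, hpf]
    have hstep : ∀ k ∈ Finset.range N,
        A k * (w - cc k)⁻¹ = ∑' j : ℕ, A k * (cc k ^ j * z ^ (j + 1)) := by
      intro k _
      rw [hgeo k, ← tsum_mul_left]
    rw [Finset.sum_congr rfl hstep,
      ← Summable.tsum_finsetSum (fun k _ => (hgsum k).mul_left (A k))]
    refine tsum_congr fun j => ?_
    calc ∑ k ∈ Finset.range N, A k * (cc k ^ j * z ^ (j+1))
        = (∑ k ∈ Finset.range N, A k * cc k ^ j) * z ^ (j+1) := by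
          rw [Finset.sum_mul]; exact Finset.sum_congr rfl fun k _ => by ring
      _ = _ := by
          congr 1
          push_cast
          rw [Finset.mul_sum]
          refine Finset.sum_congr rfl fun k _ => ?_
          simp only [hA, hcc]
          push_cast
          ring
end

section
/- For every integer N ≥ 2 and every integer ℓ with 1 ≤ ℓ < N, the probability number p_ℓ^{(N)} vanishes; equivalently, Σ_{k=1}^{N} (−1)^{k+1} sin(θ_k^{(N)}) cos^{ℓ−1}(θ_k^{(N)}) = 0 for 1 ≤ ℓ < N. -/
lemma two_sin_cos (x y : ℝ) : 2 * Real.sin x * Real.cos y = Real.sin (x+y) + Real.sin (x-y) := by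
  rw [Real.sin_add, Real.sin_sub]; ring

lemma lemB (N : ℕ) (hN : 1 ≤ N) (a : ℤ) (ha : a.natAbs < N) :
    ∑ k ∈ Finset.range N,
      (-1:ℝ)^k * Real.sin ((a:ℝ) * ((2*k+1)*Real.pi/(2*N))) = 0 := by
  have hNR : (0:ℝ) < N := by exact_mod_cast hN
  set φ : ℝ := a * Real.pi / (2*N) with hφ
  have key : ∀ k : ℕ, (a:ℝ) * ((2*(k:ℝ)+1)*Real.pi/(2*N)) = (2*k+1)*φ := by
    intro k; rw [hφ]; ring
  have h2 : |(a:ℝ)| < N := by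
    have h2' : |a| < (N:ℤ) := by rw [Int.abs_eq_natAbs]; exact_mod_cast ha
    exact_mod_cast h2'
  have habs : |φ| < Real.pi/2 := by
    have h1 : |φ| = |(a:ℝ)| * Real.pi / (2*N) := by
      rw [hφ, abs_div, abs_mul, abs_of_pos Real.pi_pos, abs_of_pos (by positivity : (0:ℝ) < 2*N)]
    rw [h1]
    rw [div_lt_div_iff₀ (by positivity) (by norm_num)]
    nlinarith [Real.pi_pos]
  have hcos : 0 < Real.cos φ :=
    Real.cos_pos_of_mem_Ioo ⟨by linarith [(abs_lt.mp habs).1], (abs_lt.mp habs).2⟩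
  set f : ℕ → ℝ := fun k => (-1:ℝ)^k * Real.sin (2*(k:ℝ)*φ) with hf
  have htel := Finset.sum_range_sub' f N
  have hpt : ∀ k : ℕ, f k - f (k+1)
      = (-1:ℝ)^k * Real.sin ((2*(k:ℝ)+1)*φ) * (2 * Real.cos φ) := by
    intro k
    simp only [hf, pow_succ]
    push_cast
    have h := two_sin_cos ((2*(k:ℝ)+1)*φ) φ
    have e1 : (2*(k:ℝ)+1)*φ + φ = 2*((k:ℝ)+1)*φ := by ring
    have e2 : (2*(k:ℝ)+1)*φ - φ = 2*(k:ℝ)*φ := by ring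
    rw [e1, e2] at h
    linear_combination (-(-1:ℝ)^k) * h
  have hend : Real.sin (2*(N:ℝ)*φ) = 0 := by
    have e : 2*(N:ℝ)*φ = a * Real.pi := by rw [hφ]; field_simp
    rw [e]
    exact_mod_cast Real.sin_int_mul_pi a
  have hsum : (∑ k ∈ Finset.range N, (-1:ℝ)^k * Real.sin ((2*(k:ℝ)+1)*φ)) * (2*Real.cos φ) = 0 := by
    rw [Finset.sum_mul]
    calc (∑ k ∈ Finset.range N, (-1:ℝ)^k * Real.sin ((2*(k:ℝ)+1)*φ) * (2*Real.cos φ))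
        = ∑ k ∈ Finset.range N, (f k - f (k+1)) := by
          exact Finset.sum_congr rfl fun k _ => (hpt k).symm
      _ = f 0 - f N := htel
      _ = 0 := by simp [hf, hend]
  have h2c : (2*Real.cos φ) ≠ 0 := by positivity
  have hz := (mul_eq_zero.mp hsum).resolve_right h2c
  calc ∑ k ∈ Finset.range N, (-1:ℝ)^k * Real.sin ((a:ℝ) * ((2*(k:ℝ)+1)*Real.pi/(2*N)))
      = ∑ k ∈ Finset.range N, (-1:ℝ)^k * Real.sin ((2*(k:ℝ)+1)*φ) := by
        exact Finset.sum_congr rfl fun k _ => by rw [key k]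
    _ = 0 := hz

lemma lemP (N : ℕ) (hN : 1 ≤ N) : ∀ m : ℕ, ∀ a : ℤ, a.natAbs + m < N →
    ∑ k ∈ Finset.range N,
      (-1:ℝ)^k * Real.sin ((a:ℝ) * ((2*k+1)*Real.pi/(2*N))) *
        Real.cos ((2*k+1)*Real.pi/(2*N)) ^ m = 0 := by
  intro m
  induction m with
  | zero =>
    intro a h
    simpa using lemB N hN a (by omega)
  | succ m ih =>
    intro a h
    have h1 : (a+1).natAbs + m < N := by
      have := Int.natAbs_add_le a 1
      simp at this; omega
    have h2 : (a-1).natAbs + m < N := by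
      have := Int.natAbs_sub_le a 1
      simp at this; omega
    have hsplit : ∑ k ∈ Finset.range N,
        (-1:ℝ)^k * Real.sin ((a:ℝ) * ((2*k+1)*Real.pi/(2*N))) *
          Real.cos ((2*k+1)*Real.pi/(2*N)) ^ (m+1)
      = (1/2) * (∑ k ∈ Finset.range N,
          (-1:ℝ)^k * Real.sin (((a+1:ℤ):ℝ) * ((2*k+1)*Real.pi/(2*N))) *
            Real.cos ((2*k+1)*Real.pi/(2*N)) ^ m)
      + (1/2) * (∑ k ∈ Finset.range N,
          (-1:ℝ)^k * Real.sin (((a-1:ℤ):ℝ) * ((2*k+1)*Real.pi/(2*N))) *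
            Real.cos ((2*k+1)*Real.pi/(2*N)) ^ m) := by
      rw [Finset.mul_sum, Finset.mul_sum, ← Finset.sum_add_distrib]
      refine Finset.sum_congr rfl fun k _ => ?_
      set θ : ℝ := (2*k+1)*Real.pi/(2*N) with hθ
      have hts := two_sin_cos ((a:ℝ)*θ) θ
      have ea : (a:ℝ)*θ + θ = ((a+1:ℤ):ℝ)*θ := by push_cast; ring
      have eb : (a:ℝ)*θ - θ = ((a-1:ℤ):ℝ)*θ := by push_cast; ring
      rw [ea, eb] at hts
      rw [pow_succ]
      linear_combination ((1:ℝ)/2) * (-1:ℝ)^k * Real.cos θ ^ m * hts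
    rw [hsplit, ih (a+1) h1, ih (a-1) h2]
    ring

/-- For `2 ≤ N` and `1 ≤ ℓ < N`, the probability number `p_ℓ^{(N)}` vanishes;
equivalently, `∑_{k=1}^N (-1)^{k+1} sin θ_k cos^{ℓ-1} θ_k = 0`. -/
theorem probNum_eq_zero_of_lt (N ℓ : ℕ) (hN : 2 ≤ N) (h1 : 1 ≤ ℓ) (h2 : ℓ < N) :
    probNum N ℓ = 0 ∧
    ∑ k ∈ Finset.range N,
      (-1 : ℝ) ^ k * Real.sin ((2 * k + 1) * Real.pi / (2 * N)) *
        Real.cos ((2 * k + 1) * Real.pi / (2 * N)) ^ (ℓ - 1) = 0 := by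
  have hsum : ∑ k ∈ Finset.range N,
      (-1 : ℝ) ^ k * Real.sin ((2 * k + 1) * Real.pi / (2 * N)) *
        Real.cos ((2 * k + 1) * Real.pi / (2 * N)) ^ (ℓ - 1) = 0 := by
    have := lemP N (by omega) (ℓ - 1) 1 (by simp; omega)
    simpa using this
  refine ⟨?_, hsum⟩
  rw [probNum, if_neg (by omega : ℓ ≠ 0), hsum, mul_zero]
end

section
/- Let N ≥ 2 and let ℓ ≥ 1 be an integer with ℓ ≡ N (mod 2) such that ℓ is not an odd multiple of N. Then 2^{ℓ} · p_ℓ^{(N)} = Σ_{t = ⌊((2−ℓ)/N − 1)/2⌋}^{⌊(ℓ/N − 1)/2⌋} (−1)^t · A(ℓ−1, (ℓ − (2t+1)N)/2 ), where the sum is over integers t in the indicated range (note ℓ − (2t+1)N is always even since ℓ ≡ N mod 2). -/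
open Finset


/-- Catalan-triangle coefficients `A(n,k) = C(n,k) - C(n,k-1)`,
with the convention `C(n,j) = 0` for `j < 0` (or `j > n`). -/
def catA (n : ℕ) (k : ℤ) : ℤ :=
  (if 0 ≤ k then (n.choose k.toNat : ℤ) else 0) -
    (if 0 ≤ k - 1 then (n.choose (k - 1).toNat : ℤ) else 0)


lemma pascal_sum (n : ℕ) (f : ℕ → ℝ) :
    ∑ j ∈ range (n+2), ((n+1).choose j : ℝ) * f j
      = ∑ j ∈ range (n+1), (n.choose j : ℝ) * f j
        + ∑ j ∈ range (n+1), (n.choose j : ℝ) * f (j+1) := by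
  rw [Finset.sum_range_succ' (fun j => ((n+1).choose j : ℝ) * f j) (n+1)]
  have h1 : ∀ j, (((n+1).choose (j+1) : ℝ)) = (n.choose j : ℝ) + (n.choose (j+1) : ℝ) := by
    intro j; rw [Nat.choose_succ_succ]; push_cast; ring
  have h2 : ∑ j ∈ range (n+1), (n.choose (j+1) : ℝ) * f (j+1)
      = ∑ j ∈ range (n+1), (n.choose j : ℝ) * f j - (n.choose 0 : ℝ) * f 0 := by
    have := Finset.sum_range_succ' (fun j => (n.choose j : ℝ) * f j) (n+1)
    rw [Finset.sum_range_succ (fun j => (n.choose j : ℝ) * f j) (n+1)] at this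
    simp only [Nat.choose_succ_self, Nat.cast_zero, zero_mul, add_zero] at this
    linarith [this]
  calc ∑ j ∈ range (n+1), ((n+1).choose (j+1) : ℝ) * f (j+1) + ((n+1).choose 0 : ℝ) * f 0
      = ∑ j ∈ range (n+1), ((n.choose j : ℝ) * f (j+1) + (n.choose (j+1) : ℝ) * f (j+1))
          + f 0 := by
        simp only [h1, Nat.choose_zero_right, Nat.cast_one, one_mul]
        congr 1
        exact Finset.sum_congr rfl (fun j _ => by ring)
    _ = ∑ j ∈ range (n+1), (n.choose j : ℝ) * f (j+1)
          + (∑ j ∈ range (n+1), (n.choose (j+1) : ℝ) * f (j+1) + f 0) := by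
        rw [Finset.sum_add_distrib]; ring
    _ = _ := by rw [h2]; simp; ring

lemma two_cos_pow (θ : ℝ) (n : ℕ) :
    (2 * Real.cos θ) ^ n
      = ∑ j ∈ range (n+1), (n.choose j : ℝ) * Real.cos (((n : ℝ) - 2 * j) * θ) := by
  induction n with
  | zero => simp
  | succ n ih =>
    have key : ∀ x : ℝ, (2 * Real.cos θ) * Real.cos (x * θ)
        = Real.cos ((x + 1) * θ) + Real.cos ((x - 1) * θ) := by
      intro x
      rw [add_mul, sub_mul, one_mul, Real.cos_add, Real.cos_sub]
      ring
    have step : (2 * Real.cos θ) ^ (n+1)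
        = ∑ j ∈ range (n+1), (n.choose j : ℝ) *
            (Real.cos ((((n : ℝ) - 2*j) + 1) * θ) + Real.cos ((((n : ℝ) - 2*j) - 1) * θ)) := by
      rw [pow_succ, ih, Finset.sum_mul]
      refine Finset.sum_congr rfl (fun j _ => ?_)
      rw [mul_comm _ (2 * Real.cos θ), ← mul_assoc, mul_comm (2 * Real.cos θ), mul_assoc, key]
    rw [step]
    have pas := pascal_sum n (fun j => Real.cos ((((n : ℝ) + 1) - 2*(j:ℕ)) * θ))
    have e1 : ∑ j ∈ range (n+1+1), ((n+1).choose j : ℝ) * Real.cos ((((n+1:ℕ) : ℝ) - 2 * j) * θ)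
        = ∑ j ∈ range (n+2), ((n+1).choose j : ℝ) * Real.cos ((((n : ℝ) + 1) - 2*(j:ℕ)) * θ) := by
      refine Finset.sum_congr rfl (fun j _ => ?_)
      push_cast
      ring_nf
    rw [e1, pas]
    rw [← Finset.sum_add_distrib]
    refine Finset.sum_congr rfl (fun j _ => ?_)
    have a1 : ((n : ℝ) - 2*j) + 1 = ((n : ℝ) + 1) - 2*(j:ℕ) := by push_cast; ring
    have a2 : ((n : ℝ) - 2*j) - 1 = ((n : ℝ) + 1) - 2*((j+1:ℕ):ℕ) := by push_cast; ring
    rw [a1, a2]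
    ring

lemma sin_cos_expand (θ : ℝ) (n : ℕ) :
    (2:ℝ)^(n+1) * (Real.sin θ * Real.cos θ ^ n)
      = ∑ j ∈ range (n+1), (n.choose j : ℝ) *
          (Real.sin ((((n:ℝ)+1) - 2*j) * θ) - Real.sin ((((n:ℝ)-1) - 2*j) * θ)) := by
  have key2 : ∀ x : ℝ, 2 * Real.sin θ * Real.cos (x * θ)
      = Real.sin ((x + 1) * θ) - Real.sin ((x - 1) * θ) := by
    intro x
    rw [add_mul, sub_mul, one_mul, Real.sin_add, Real.sin_sub]
    ring
  have h : (2:ℝ)^(n+1) * (Real.sin θ * Real.cos θ ^ n)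
      = (2 * Real.sin θ) * (2 * Real.cos θ) ^ n := by
    rw [mul_pow]; ring
  rw [h, two_cos_pow, Finset.mul_sum]
  refine Finset.sum_congr rfl (fun j _ => ?_)
  have hk := key2 ((n:ℝ) - 2*j)
  have a1 : ((n : ℝ) - 2*j) + 1 = ((n : ℝ) + 1) - 2*j := by ring
  have a2 : ((n : ℝ) - 2*j) - 1 = ((n : ℝ) - 1) - 2*j := by ring
  rw [a1, a2] at hk
  linear_combination (n.choose j : ℝ) * hk

lemma sinSum (N : ℕ) (hN : 1 ≤ N) (m : ℤ) (hm : (2:ℤ) ∣ (m - N)) :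
    ∑ k ∈ range N, (-1:ℝ)^k * Real.sin ((m:ℝ) * ((2*k+1) * Real.pi / (2*N)))
      = if (2*(N:ℤ)) ∣ (m - N) then (N:ℝ) * (-1:ℝ)^((m - (N:ℤ))/(2*(N:ℤ))) else 0 := by
  have hN0 : (N:ℝ) ≠ 0 := by positivity
  set a : ℝ := (m:ℝ) * Real.pi / (2*N) with ha
  have harg : ∀ k : ℕ, (m:ℝ) * ((2*k+1) * Real.pi / (2*N)) = (2*k+1) * a := by
    intro k; rw [ha]; field_simp
  -- pass to ℂ
  set w : ℂ := Complex.exp (a * Complex.I) with hw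
  set z : ℂ := Complex.exp ((2*a : ℝ) * Complex.I) with hz
  have hterm : ∀ k : ℕ, ((-1:ℂ)^k * Complex.exp (((2*k+1) * a : ℝ) * Complex.I))
      = w * (-z)^k := by
    intro k
    have e1 : (((2*(k:ℝ)+1) * a : ℝ) : ℂ) * Complex.I
        = (a : ℂ) * Complex.I + (k:ℂ) * (((2*a : ℝ):ℂ) * Complex.I) := by push_cast; ring
    rw [e1, Complex.exp_add, Complex.exp_nat_mul, ← hw, ← hz, neg_pow]
    ring
  have himp : ∑ k ∈ range N, (-1:ℝ)^k * Real.sin ((m:ℝ) * ((2*k+1) * Real.pi / (2*N)))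
      = (w * ∑ k ∈ range N, (-z)^k).im := by
    rw [Finset.mul_sum, Complex.im_sum]
    refine Finset.sum_congr rfl (fun k _ => ?_)
    rw [harg k, ← hterm k]
    have hc : ((-1:ℂ)^k : ℂ) = (((-1:ℝ)^k : ℝ) : ℂ) := by push_cast; ring
    rw [hc, Complex.mul_im, Complex.ofReal_re, Complex.ofReal_im,
      Complex.exp_ofReal_mul_I_im]
    ring
  rw [himp]
  by_cases h : (2*(N:ℤ)) ∣ (m - N)
  · rw [if_pos h]
    obtain ⟨t, ht⟩ := h
    have hind : (m - (N:ℤ))/(2*(N:ℤ)) = t := by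
      rw [ht]; exact Int.mul_ediv_cancel_left t (by positivity)
    have ha2 : a = (2*(t:ℝ)+1) * (Real.pi/2) := by
      rw [ha]
      have hm' : (m:ℝ) = (N:ℝ) * (2*t+1) := by
        have : m = N * (2*t+1) := by linarith [ht]
        rw [this]; push_cast; ring
      rw [hm']; field_simp
    have hzval : z = -1 := by
      rw [hz, ha2]
      have : ((2 * ((2*(t:ℝ)+1) * (Real.pi/2)) : ℝ) : ℂ) * Complex.I
          = ((2*t+1 : ℤ) : ℂ) * ((Real.pi : ℂ) * Complex.I) := by push_cast; ring
      rw [this, Complex.exp_int_mul, Complex.exp_pi_mul_I]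
      have h2t : ((-1:ℂ))^((2*t : ℤ)) = 1 := by
        rw [zpow_mul]; norm_num
      have : ((-1:ℂ))^((2*t+1 : ℤ)) = ((-1:ℂ))^((2*t:ℤ)) * (-1:ℂ) := by
        rw [zpow_add₀ (by norm_num : (-1:ℂ) ≠ 0)]; norm_num
      rw [this, h2t]; ring
    have hwval : w = ((-1:ℝ)^t : ℝ) * Complex.I := by
      rw [hw, ha2]
      have : (((2*(t:ℝ)+1) * (Real.pi/2) : ℝ) : ℂ) * Complex.I
          = ((t : ℤ) : ℂ) * ((Real.pi : ℂ) * Complex.I) + ((Real.pi/2 : ℝ) : ℂ) * Complex.I := by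
        push_cast; ring
      rw [this, Complex.exp_add, Complex.exp_int_mul, Complex.exp_pi_mul_I]
      rw [Complex.exp_mul_I]
      push_cast
      rw [Complex.cos_pi_div_two, Complex.sin_pi_div_two]
      ring
    rw [hzval, hwval, hind]
    simp only [neg_neg, one_pow, Finset.sum_const, Finset.card_range, nsmul_eq_mul, mul_one]
    have e : (((-1:ℝ)^t : ℝ) : ℂ) * Complex.I * (N : ℂ)
        = ((((N:ℝ) * (-1:ℝ)^t) : ℝ) : ℂ) * Complex.I := by push_cast; ring
    rw [e, Complex.mul_im, Complex.ofReal_re, Complex.ofReal_im, Complex.I_im, Complex.I_re]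
    ring
  · rw [if_neg h]
    -- show -z ≠ 1
    have hzn : -z ≠ 1 := by
      intro hcon
      have h1 : Complex.exp (((2*a + Real.pi : ℝ)) * Complex.I) = 1 := by
        have : (((2*a + Real.pi : ℝ)) : ℂ) * Complex.I
            = ((2*a : ℝ) : ℂ) * Complex.I + (Real.pi : ℂ) * Complex.I := by push_cast; ring
        rw [this, Complex.exp_add, ← hz, Complex.exp_pi_mul_I]
        rw [mul_neg_one, hcon]
      rw [Complex.exp_eq_one_iff] at h1
      obtain ⟨s, hs⟩ := h1
      have hreal : (2*a + Real.pi : ℝ) = (s : ℝ) * (2 * Real.pi) := by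
        have hI : Complex.I ≠ 0 := Complex.I_ne_zero
        have := mul_right_cancel₀ hI (by rw [hs]; push_cast; ring :
          (((2*a + Real.pi : ℝ)) : ℂ) * Complex.I = (((s:ℝ) * (2*Real.pi) : ℝ) : ℂ) * Complex.I)
        exact_mod_cast this
      -- derive m + N = 2 s N
      have hpi : Real.pi ≠ 0 := Real.pi_ne_zero
      have hmN : (m : ℝ) + N = 2 * s * N := by
        rw [ha] at hreal
        field_simp at hreal
        nlinarith [hreal, Real.pi_pos]
      have hmNZ : m + (N:ℤ) = 2 * s * N := by exact_mod_cast hmN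
      exact h ⟨s - 1, by linarith [hmNZ]⟩
    have hgeom := geom_sum_eq hzn N
    have hznum : (-z)^N = 1 := by
      have hzN : z^N = Complex.exp (((m:ℝ) * Real.pi : ℝ) * Complex.I) := by
        rw [hz, ← Complex.exp_nat_mul]
        congr 1
        have hr : 2 * a * (N:ℝ) = (m:ℝ) * Real.pi := by rw [ha]; field_simp
        have e : ((N:ℂ)) * (((2*a : ℝ) : ℂ) * Complex.I)
            = ((2*a*(N:ℝ) : ℝ) : ℂ) * Complex.I := by push_cast; ring
        rw [e, hr]
      have hzm : z^N = (-1:ℂ)^m := by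
        rw [hzN]
        have : (((m:ℝ) * Real.pi : ℝ) : ℂ) * Complex.I = (m : ℂ) * ((Real.pi:ℂ) * Complex.I) := by
          push_cast; ring
        rw [this, Complex.exp_int_mul, Complex.exp_pi_mul_I]
      obtain ⟨c, hc⟩ := hm
      have hmc : m = (N:ℤ) + 2*c := by linarith [hc]
      rw [neg_pow, hzm, hmc]
      rw [zpow_add₀ (by norm_num : (-1:ℂ) ≠ 0), zpow_natCast]
      have h2c : ((-1:ℂ))^((2*c : ℤ)) = 1 := by rw [zpow_mul]; norm_num
      rw [h2c, mul_one, ← mul_pow]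
      norm_num
    rw [hgeom, hznum]
    simp

noncomputable def Dfun (N : ℕ) (m : ℤ) : ℝ :=
  if (2*(N:ℤ)) ∣ (m - N) then (-1:ℝ)^((m - (N:ℤ))/(2*(N:ℤ))) else 0

noncomputable def Bfun (n : ℕ) (k : ℤ) : ℝ :=
  if 0 ≤ k then ((n.choose k.toNat : ℕ) : ℝ) else 0

lemma floor_le_iff_q (b : ℚ) (N : ℕ) (hN : 1 ≤ N) (t : ℤ) :
    t ≤ ⌊((b / N) - 1) / 2⌋ ↔ ((2*t+1) : ℚ) * N ≤ b := by
  have hNq : (0:ℚ) < N := by exact_mod_cast hN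
  rw [Int.le_floor, le_div_iff₀ (by norm_num : (0:ℚ) < 2), le_sub_iff_add_le,
    le_div_iff₀ hNq]
  constructor <;> intro h <;> nlinarith [h]

lemma hi_le (N ℓ : ℕ) (hN : 1 ≤ N) (t : ℤ) :
    t ≤ ⌊(((ℓ:ℚ)) / N - 1) / 2⌋ ↔ (2*t+1) * (N:ℤ) ≤ (ℓ:ℤ) := by
  rw [floor_le_iff_q (ℓ:ℚ) N hN t]
  constructor <;> intro h <;> exact_mod_cast h

lemma lo_le (N ℓ : ℕ) (hN : 1 ≤ N) (t : ℤ) :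
    t ≤ ⌊((((2:ℚ) - ℓ) / N) - 1) / 2⌋ ↔ (2*t+1) * (N:ℤ) ≤ 2 - (ℓ:ℤ) := by
  rw [floor_le_iff_q ((2:ℚ) - ℓ) N hN t]
  constructor <;> intro h <;> exact_mod_cast h

lemma sumE (N ℓ : ℕ) (hN : 2 ≤ N) (hℓ : 1 ≤ ℓ) (a : ℤ) (ha1 : a ≤ (ℓ:ℤ))
    (ha2 : (ℓ:ℤ) - 2 ≤ a) (hpar : (2:ℤ) ∣ (a - N)) :
    ∑ j ∈ range ℓ, (((ℓ-1).choose j : ℕ) : ℝ) * Dfun N (a - 2*j)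
      = ∑ t ∈ Finset.Icc ⌊((((2:ℚ) - ℓ) / N) - 1) / 2⌋ ⌊(((ℓ:ℚ)) / N - 1) / 2⌋,
          (-1:ℝ)^t * Bfun (ℓ-1) ((a - (2*t+1)*N)/2) := by
  have hN1 : 1 ≤ N := le_trans (by norm_num) hN
  set lo := ⌊((((2:ℚ) - ℓ) / N) - 1) / 2⌋ with hlo
  set hi := ⌊(((ℓ:ℚ)) / N - 1) / 2⌋ with hhi
  -- LHS as filtered sum
  have L1 : ∑ j ∈ range ℓ, (((ℓ-1).choose j : ℕ) : ℝ) * Dfun N (a - 2*j)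
      = ∑ j ∈ (range ℓ).filter (fun j : ℕ => (2*(N:ℤ)) ∣ (a - 2*(j:ℤ) - (N:ℤ))),
          (((ℓ-1).choose j : ℕ) : ℝ) * (-1:ℝ)^((a - 2*(j:ℤ) - (N:ℤ))/(2*(N:ℤ))) := by
    rw [Finset.sum_filter]
    refine Finset.sum_congr rfl (fun j _ => ?_)
    unfold Dfun
    have harg : a - 2*(j:ℤ) - (N:ℤ) = (a - 2*j) - N := by ring
    rw [harg]
    split_ifs with h
    · rfl
    · rw [mul_zero]
  -- RHS as filtered sum
  have R1 : ∑ t ∈ Finset.Icc lo hi, (-1:ℝ)^t * Bfun (ℓ-1) ((a - (2*t+1)*N)/2)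
      = ∑ t ∈ (Finset.Icc lo hi).filter (fun t => 0 ≤ (a - (2*t+1)*N)/2),
          (-1:ℝ)^t * (((ℓ-1).choose ((a - (2*t+1)*N)/2).toNat : ℕ) : ℝ) := by
    rw [Finset.sum_filter]
    refine Finset.sum_congr rfl (fun t _ => ?_)
    unfold Bfun
    split_ifs with h
    · rfl
    · rw [mul_zero]
  have R2 : ∑ t ∈ (Finset.Icc lo hi).filter (fun t => 0 ≤ (a - (2*t+1)*N)/2),
          (-1:ℝ)^t * (((ℓ-1).choose ((a - (2*t+1)*N)/2).toNat : ℕ) : ℝ)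
      = ∑ t ∈ (Finset.Icc lo hi).filter
            (fun t => 0 ≤ (a - (2*t+1)*N)/2 ∧ (a - (2*t+1)*N)/2 < (ℓ:ℤ)),
          (-1:ℝ)^t * (((ℓ-1).choose ((a - (2*t+1)*N)/2).toNat : ℕ) : ℝ) := by
    symm
    refine Finset.sum_subset ?_ ?_
    · intro x hx
      rw [Finset.mem_filter] at hx ⊢
      exact ⟨hx.1, hx.2.1⟩
    · intro t ht hnt
      rw [Finset.mem_filter] at ht hnt
      have h1 : 0 ≤ (a - (2*t+1)*N)/2 := ht.2
      have h2 : ¬ ((a - (2*t+1)*N)/2 < (ℓ:ℤ)) := by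
        intro hc; exact hnt ⟨ht.1, h1, hc⟩
      push_neg at h2
      have hlt : ℓ - 1 < ((a - (2*t+1)*N)/2).toNat := by
        generalize (a - (2*t+1)*N)/2 = q at h1 h2
        omega
      rw [Nat.choose_eq_zero_of_lt hlt]
      norm_num
  rw [L1, R1, R2]
  refine Finset.sum_nbij' (fun j : ℕ => (a - 2*(j:ℤ) - N)/(2*(N:ℤ)))
    (fun t : ℤ => ((a - (2*t+1)*N)/2).toNat) ?_ ?_ ?_ ?_ ?_
  · -- forward membership
    intro j hj
    rw [Finset.mem_filter, Finset.mem_range] at hj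
    obtain ⟨hjr, hd⟩ := hj
    obtain ⟨T, hT⟩ := hd
    have hTdiv : (a - 2*(j:ℤ) - N)/(2*(N:ℤ)) = T := by
      rw [hT]; exact Int.mul_ediv_cancel_left T (by positivity)
    rw [Finset.mem_filter, Finset.mem_Icc, hTdiv]
    have hkey : a - 2*(j:ℤ) = (2*T+1)*N := by linarith [hT]
    have hj0 : (0:ℤ) ≤ (j:ℤ) := Int.natCast_nonneg j
    have hjl : (j:ℤ) ≤ (ℓ:ℤ) - 1 := by
      have : (j:ℤ) < (ℓ:ℤ) := by exact_mod_cast hjr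
      omega
    have hN2 : (2:ℤ) ≤ (N:ℤ) := by exact_mod_cast hN
    refine ⟨⟨?_, ?_⟩, ?_⟩
    · by_contra hcon
      push_neg at hcon
      have hTl : T + 1 ≤ lo := by omega
      rw [hlo, lo_le N ℓ hN1] at hTl
      nlinarith [hTl, hkey]
    · rw [hhi, hi_le N ℓ hN1]
      linarith [hkey]
    · have he : (a - (2*T+1)*N) = 2*(j:ℤ) := by linarith [hkey]
      rw [he, Int.mul_ediv_cancel_left (j:ℤ) (by norm_num)]
      exact ⟨hj0, by exact_mod_cast hjr⟩
  · -- backward membership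
    intro t ht
    rw [Finset.mem_filter] at ht
    obtain ⟨htI, hq1, hq2⟩ := ht
    have hpar2 : (2:ℤ) ∣ (a - (2*t+1)*N) := by
      obtain ⟨c, hc⟩ := hpar
      exact ⟨c - t*N, by linarith [hc]⟩
    obtain ⟨J, hJ⟩ := hpar2
    have hJdiv : (a - (2*t+1)*N)/2 = J := by
      rw [hJ]; exact Int.mul_ediv_cancel_left J (by norm_num)
    rw [hJdiv] at hq1 hq2
    rw [Finset.mem_filter, Finset.mem_range]
    constructor
    · zify
      rw [hJdiv, Int.toNat_of_nonneg hq1]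
      exact hq2
    · have htn : ((((a - (2*t+1)*N)/2).toNat : ℕ) : ℤ) = J := by
        rw [hJdiv]; exact Int.toNat_of_nonneg hq1
      rw [htn]
      exact ⟨t, by linarith [hJ]⟩
  · -- left inverse
    intro j hj
    rw [Finset.mem_filter, Finset.mem_range] at hj
    obtain ⟨hjr, hd⟩ := hj
    obtain ⟨T, hT⟩ := hd
    have hTdiv : (a - 2*(j:ℤ) - N)/(2*(N:ℤ)) = T := by
      rw [hT]; exact Int.mul_ediv_cancel_left T (by positivity)
    rw [hTdiv]
    have he : (a - (2*T+1)*N) = 2*(j:ℤ) := by linarith [hT]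
    rw [he, Int.mul_ediv_cancel_left (j:ℤ) (by norm_num)]
    exact Int.toNat_natCast j
  · -- right inverse
    intro t ht
    rw [Finset.mem_filter] at ht
    obtain ⟨htI, hq1, hq2⟩ := ht
    have hpar2 : (2:ℤ) ∣ (a - (2*t+1)*N) := by
      obtain ⟨c, hc⟩ := hpar
      exact ⟨c - t*N, by linarith [hc]⟩
    obtain ⟨J, hJ⟩ := hpar2
    have hJdiv : (a - (2*t+1)*N)/2 = J := by
      rw [hJ]; exact Int.mul_ediv_cancel_left J (by norm_num)
    rw [hJdiv] at hq1 ⊢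
    have htn : ((J.toNat : ℕ) : ℤ) = J := Int.toNat_of_nonneg hq1
    rw [htn]
    have he : a - 2*J - N = 2*(N:ℤ)*t := by linarith [hJ]
    rw [he]
    exact Int.mul_ediv_cancel_left t (by positivity)
  · -- values agree
    intro j hj
    rw [Finset.mem_filter, Finset.mem_range] at hj
    obtain ⟨hjr, hd⟩ := hj
    obtain ⟨T, hT⟩ := hd
    have hTdiv : (a - 2*(j:ℤ) - N)/(2*(N:ℤ)) = T := by
      rw [hT]; exact Int.mul_ediv_cancel_left T (by positivity)
    rw [hTdiv]
    have hkey : (a - (2*T+1)*N) = 2*(j:ℤ) := by linarith [hT]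
    rw [hkey, Int.mul_ediv_cancel_left (j:ℤ) (by norm_num), Int.toNat_natCast]
    ring

/-- For `ℓ ≡ N (mod 2)` with `ℓ` not an odd multiple of `N`:
`2^ℓ p_ℓ^{(N)} = ∑_{t=⌊((2-ℓ)/N-1)/2⌋}^{⌊(ℓ/N-1)/2⌋} (-1)^t A(ℓ-1, (ℓ-(2t+1)N)/2)`. -/
theorem two_pow_mul_probNum_eq_sum_catA (N ℓ : ℕ) (hN : 2 ≤ N) (hℓ : 1 ≤ ℓ)
    (hmod : ℓ % 2 = N % 2) (hodd : ¬∃ t : ℕ, ℓ = (2 * t + 1) * N) :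
    (2 : ℝ) ^ ℓ * probNum N ℓ =
      ∑ t ∈ Finset.Icc ⌊((((2 : ℚ) - ℓ) / N) - 1) / 2⌋ ⌊(((ℓ : ℚ) / N) - 1) / 2⌋,
        (-1 : ℝ) ^ t * (catA (ℓ - 1) (((ℓ : ℤ) - (2 * t + 1) * N) / 2) : ℝ) := by
  have hN1 : 1 ≤ N := le_trans (by norm_num) hN
  have hN0 : (N:ℝ) ≠ 0 := by positivity
  obtain ⟨n, rfl⟩ : ∃ n, ℓ = n + 1 := ⟨ℓ - 1, by omega⟩
  have hn : (n + 1) - 1 = n := by omega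
  have hpar1 : (2:ℤ) ∣ ((n:ℤ) + 1 - N) := by omega
  have hpar2 : (2:ℤ) ∣ ((n:ℤ) + 1 - 2 - N) := by omega
  rw [probNum, if_neg (by omega), hn]
  -- Step 1: expand via sin_cos_expand
  have step1 : (2:ℝ)^(n+1) * ((1 / (N:ℝ)) * ∑ k ∈ range N,
        (-1:ℝ)^k * Real.sin ((2*(k:ℝ)+1) * Real.pi / (2*(N:ℝ))) *
          Real.cos ((2*(k:ℝ)+1) * Real.pi / (2*(N:ℝ))) ^ n)
      = (1 / (N:ℝ)) * ∑ k ∈ range N, ∑ j ∈ range (n+1),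
          (n.choose j : ℝ) * ((-1:ℝ)^k *
            (Real.sin ((((n:ℝ)+1) - 2*j) * ((2*(k:ℝ)+1) * Real.pi / (2*(N:ℝ))))
              - Real.sin ((((n:ℝ)-1) - 2*j) * ((2*(k:ℝ)+1) * Real.pi / (2*(N:ℝ)))))) := by
    rw [← mul_assoc, mul_comm ((2:ℝ)^(n+1)) (1/(N:ℝ)), mul_assoc, Finset.mul_sum]
    congr 1
    refine Finset.sum_congr rfl (fun k _ => ?_)
    have he := sin_cos_expand ((2*(k:ℝ)+1) * Real.pi / (2*(N:ℝ))) n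
    calc (2:ℝ)^(n+1) * ((-1:ℝ)^k * Real.sin ((2*(k:ℝ)+1) * Real.pi / (2*(N:ℝ))) *
          Real.cos ((2*(k:ℝ)+1) * Real.pi / (2*(N:ℝ))) ^ n)
        = (-1:ℝ)^k * ((2:ℝ)^(n+1) * (Real.sin ((2*(k:ℝ)+1) * Real.pi / (2*(N:ℝ))) *
            Real.cos ((2*(k:ℝ)+1) * Real.pi / (2*(N:ℝ))) ^ n)) := by ring
      _ = (-1:ℝ)^k * ∑ j ∈ range (n+1), (n.choose j : ℝ) *
            (Real.sin ((((n:ℝ)+1) - 2*j) * ((2*(k:ℝ)+1) * Real.pi / (2*(N:ℝ))))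
              - Real.sin ((((n:ℝ)-1) - 2*j) * ((2*(k:ℝ)+1) * Real.pi / (2*(N:ℝ))))) := by
          rw [he]
      _ = _ := by
          rw [Finset.mul_sum]
          exact Finset.sum_congr rfl (fun j _ => by ring)
  rw [step1, Finset.sum_comm, Finset.mul_sum]
  -- Step 2: evaluate inner sums by sinSum
  have step2 : ∀ j ∈ range (n+1),
      (1 / (N:ℝ)) * ∑ k ∈ range N,
          (n.choose j : ℝ) * ((-1:ℝ)^k *
            (Real.sin ((((n:ℝ)+1) - 2*j) * ((2*(k:ℝ)+1) * Real.pi / (2*(N:ℝ))))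
              - Real.sin ((((n:ℝ)-1) - 2*j) * ((2*(k:ℝ)+1) * Real.pi / (2*(N:ℝ))))))
        = (n.choose j : ℝ) * (Dfun N ((n:ℤ) + 1 - 2*j) - Dfun N ((n:ℤ) + 1 - 2 - 2*j)) := by
    intro j _
    have hm1 : (2:ℤ) ∣ (((n:ℤ) + 1 - 2*j) - N) := by omega
    have hm2 : (2:ℤ) ∣ (((n:ℤ) + 1 - 2 - 2*j) - N) := by omega
    have hs1 := sinSum N hN1 ((n:ℤ) + 1 - 2*j) hm1
    have hs2 := sinSum N hN1 ((n:ℤ) + 1 - 2 - 2*j) hm2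
    have harg1 : ∀ k : ℕ, (((n:ℝ)+1) - 2*j) * ((2*(k:ℝ)+1) * Real.pi / (2*(N:ℝ)))
        = ((((n:ℤ) + 1 - 2*j : ℤ)):ℝ) * ((2*(k:ℝ)+1) * Real.pi / (2*(N:ℝ))) := by
      intro k; push_cast; ring
    have harg2 : ∀ k : ℕ, (((n:ℝ)-1) - 2*j) * ((2*(k:ℝ)+1) * Real.pi / (2*(N:ℝ)))
        = ((((n:ℤ) + 1 - 2 - 2*j : ℤ)):ℝ) * ((2*(k:ℝ)+1) * Real.pi / (2*(N:ℝ))) := by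
      intro k; push_cast; ring
    have hsum : ∑ k ∈ range N,
          (n.choose j : ℝ) * ((-1:ℝ)^k *
            (Real.sin ((((n:ℝ)+1) - 2*j) * ((2*(k:ℝ)+1) * Real.pi / (2*(N:ℝ))))
              - Real.sin ((((n:ℝ)-1) - 2*j) * ((2*(k:ℝ)+1) * Real.pi / (2*(N:ℝ))))))
        = (n.choose j : ℝ) *
          ((∑ k ∈ range N, (-1:ℝ)^k *
              Real.sin (((((n:ℤ) + 1 - 2*j : ℤ)):ℝ) * ((2*(k:ℝ)+1) * Real.pi / (2*(N:ℝ)))))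
           - ∑ k ∈ range N, (-1:ℝ)^k *
              Real.sin (((((n:ℤ) + 1 - 2 - 2*j : ℤ)):ℝ) * ((2*(k:ℝ)+1) * Real.pi / (2*(N:ℝ))))) := by
      rw [← Finset.sum_sub_distrib, Finset.mul_sum]
      refine Finset.sum_congr rfl (fun k _ => ?_)
      rw [harg1 k, harg2 k]
      ring
    rw [hsum, hs1, hs2]
    unfold Dfun
    split_ifs with h1 h2 h2 <;> field_simp <;> ring
  rw [Finset.sum_congr rfl step2]
  -- Step 3: split and apply sumE
  have hsplit : ∑ j ∈ range (n+1),
        (n.choose j : ℝ) * (Dfun N ((n:ℤ) + 1 - 2*j) - Dfun N ((n:ℤ) + 1 - 2 - 2*j))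
      = (∑ j ∈ range (n+1), (n.choose j : ℝ) * Dfun N (((n:ℤ) + 1) - 2*j))
        - ∑ j ∈ range (n+1), (n.choose j : ℝ) * Dfun N (((n:ℤ) + 1 - 2) - 2*j) := by
    rw [← Finset.sum_sub_distrib]
    refine Finset.sum_congr rfl (fun j _ => ?_)
    have e1 : ((n:ℤ) + 1) - 2*(j:ℤ) = (n:ℤ) + 1 - 2*j := by ring
    have e2 : ((n:ℤ) + 1 - 2) - 2*(j:ℤ) = (n:ℤ) + 1 - 2 - 2*j := by ring
    rw [e1, e2]; ring
  rw [hsplit]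
  have hE1 := sumE N (n+1) hN hℓ ((n:ℤ) + 1) (by omega) (by omega) hpar1
  have hE2 := sumE N (n+1) hN hℓ ((n:ℤ) + 1 - 2) (by omega) (by omega) (by omega)
  rw [hn] at hE1 hE2
  rw [hE1, hE2, ← Finset.sum_sub_distrib]
  refine Finset.sum_congr rfl (fun t ht => ?_)
  -- Step 4: identify with catA
  have hpart : (2:ℤ) ∣ ((n:ℤ) + 1 - (2*t+1)*N) := by
    obtain ⟨c, hc⟩ := hpar1
    exact ⟨c - t*N, by linarith [hc]⟩
  obtain ⟨c, hc⟩ := hpart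
  have hd1 : ((n:ℤ) + 1 - (2*t+1)*N)/2 = c := by
    rw [hc]; exact Int.mul_ediv_cancel_left c (by norm_num)
  have hd2 : ((n:ℤ) + 1 - 2 - (2*t+1)*N)/2 = c - 1 := by
    have : (n:ℤ) + 1 - 2 - (2*t+1)*N = 2*(c-1) := by linarith [hc]
    rw [this]; exact Int.mul_ediv_cancel_left (c-1) (by norm_num)
  have hd3 : (((n:ℤ) + 1) - (2*t+1)*N)/2 = c := by
    have : ((n:ℤ) + 1) - (2*t+1)*N = (n:ℤ) + 1 - (2*t+1)*N := by ring
    rw [this, hd1]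
  have hcat : ((catA n c : ℤ) : ℝ) = Bfun n c - Bfun n (c - 1) := by
    unfold catA Bfun
    push_cast [apply_ite (fun z : ℤ => (z:ℝ))]
    norm_num
  have hstmt : ((n+1 : ℕ) : ℤ) - (2*t+1)*(N:ℤ) = ((n:ℤ)+1) - (2*t+1)*N := by push_cast; ring
  rw [hstmt, hd1, hd2, hcat]
  ring
end

section
/- Let N ≥ 2 and let ℓ = (2k+1)N for a natural number k ≥ 0. Then 2^{ℓ} · p_ℓ^{(N)} = Σ_{s=1}^{2k} (−1)^{k−s} · A(ℓ−1, sN) + 2·(−1)^k. -/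
lemma catA_neg (n : ℕ) (j : ℤ) (h : j < 0) : catA n j = 0 := by
  simp [catA, not_le.mpr h, not_le.mpr (by omega : j - 1 < 0)]
  intro h1; omega

lemma catA_ofNat (n m : ℕ) :
    catA n (m : ℤ) = (n.choose m : ℤ) - if m = 0 then 0 else (n.choose (m - 1) : ℤ) := by
  cases m with
  | zero => simp [catA]
  | succ m =>
      have h1 : ((m + 1 : ℕ) : ℤ) - 1 = (m : ℤ) := by push_cast; ring
      simp [catA, h1, Int.toNat_natCast]
      intro h; omega

lemma catA_pascal (n : ℕ) (j : ℤ) : catA (n + 1) j = catA n j + catA n (j - 1) := by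
  rcases lt_or_ge j 0 with h | h
  · rw [catA_neg _ _ h, catA_neg _ _ h, catA_neg _ _ (by omega)]; ring
  · lift j to ℕ using h
    cases j with
    | zero =>
        have : ((0 : ℕ) : ℤ) - 1 = (-1 : ℤ) := by norm_num
        rw [this, catA_neg n (-1) (by norm_num)]
        simp [catA]
    | succ m =>
        have h1 : ((m + 1 : ℕ) : ℤ) - 1 = (m : ℤ) := by push_cast; ring
        rw [h1, catA_ofNat, catA_ofNat, catA_ofNat]
        cases m with
        | zero => simp [Nat.choose_succ_succ]
        | succ m' => simp [Nat.choose_succ_succ]; push_cast; ring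

lemma catA_big (n m : ℕ) (h : n + 2 ≤ m) : catA n (m : ℤ) = 0 := by
  rw [catA_ofNat, Nat.choose_eq_zero_of_lt (by omega), if_neg (by omega),
    Nat.choose_eq_zero_of_lt (by omega)]
  simp

lemma catA_zero' (n : ℕ) : catA n 0 = 1 := by simp [catA]

lemma catA_top (n : ℕ) : catA n ((n : ℤ) + 1) = -1 := by
  have : ((n : ℤ) + 1) = ((n + 1 : ℕ) : ℤ) := by push_cast; ring
  rw [this, catA_ofNat, Nat.choose_eq_zero_of_lt (by omega), if_neg (by omega)]
  simp

lemma catA_negone (n : ℕ) : catA n (-1) = 0 := by simp [catA]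

lemma sin_plus (a b : ℝ) :
    Real.sin (a + b) + Real.sin (a - b) = 2 * Real.sin a * Real.cos b := by
  rw [Real.sin_add, Real.sin_sub]; ring

lemma lemA (ℓ : ℕ) (hl : 1 ≤ ℓ) (θ : ℝ) :
    (2 : ℝ) ^ ℓ * (Real.sin θ * Real.cos θ ^ (ℓ - 1)) =
      ∑ j ∈ Finset.range (ℓ + 1), (catA (ℓ - 1) (j : ℤ) : ℝ) *
        Real.sin (((ℓ : ℝ) - 2 * j) * θ) := by
  induction ℓ, hl using Nat.le_induction with
  | base =>
      have h0 : catA 0 0 = 1 := by simp [catA]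
      have h1 : catA 0 1 = -1 := by simp [catA]
      simp only [Finset.sum_range_succ, Finset.sum_range_zero]
      norm_num [h0, h1]
      ring
  | succ n hn ih =>
      have lhs_eq : (2 : ℝ) ^ (n + 1) * (Real.sin θ * Real.cos θ ^ (n + 1 - 1)) =
          (2 * Real.cos θ) * ((2 : ℝ) ^ n * (Real.sin θ * Real.cos θ ^ (n - 1))) := by
        have hc : Real.cos θ ^ (n + 1 - 1) = Real.cos θ ^ (n - 1) * Real.cos θ := by
          rw [← pow_succ]; congr 1; omega
        rw [hc, pow_succ]; ring
      have step : ∀ j : ℕ, (2 * Real.cos θ) * ((catA (n - 1) (j : ℤ) : ℝ) *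
            Real.sin (((n : ℝ) - 2 * j) * θ)) =
          (catA (n - 1) (j : ℤ) : ℝ) * Real.sin ((((n : ℝ) + 1) - 2 * j) * θ)
            + (catA (n - 1) (j : ℤ) : ℝ) * Real.sin ((((n : ℝ) - 1) - 2 * j) * θ) := by
        intro j
        have h := sin_plus (((n : ℝ) - 2 * j) * θ) θ
        rw [show ((n : ℝ) - 2 * j) * θ + θ = (((n : ℝ) + 1) - 2 * j) * θ by ring,
            show ((n : ℝ) - 2 * j) * θ - θ = (((n : ℝ) - 1) - 2 * j) * θ by ring] at h
        linear_combination (-(catA (n - 1) (j : ℤ) : ℝ)) * h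
      rw [lhs_eq, ih, Finset.mul_sum, Finset.sum_congr rfl fun j _ => step j,
        Finset.sum_add_distrib]
      -- Now: Σ_{range(n+1)} c_j sin((n+1-2j)θ) + Σ_{range(n+1)} c_j sin((n-1-2j)θ)
      --    = Σ_{range(n+2)} catA(n, j) sin((n+1-2j)θ)
      have target_eq :
          ∑ j ∈ Finset.range (n + 2), (catA (n + 1 - 1) (j : ℤ) : ℝ) *
              Real.sin ((((n + 1 : ℕ) : ℝ) - 2 * j) * θ) =
            (∑ j ∈ Finset.range (n + 2), (catA (n - 1) (j : ℤ) : ℝ) *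
              Real.sin ((((n : ℝ) + 1) - 2 * j) * θ))
            + ∑ j ∈ Finset.range (n + 2), (catA (n - 1) ((j : ℤ) - 1) : ℝ) *
              Real.sin ((((n : ℝ) + 1) - 2 * j) * θ) := by
        rw [← Finset.sum_add_distrib]
        refine Finset.sum_congr rfl fun j _ => ?_
        have hsub : n + 1 - 1 = (n - 1) + 1 := by omega
        rw [hsub, catA_pascal]
        push_cast
        ring
      rw [target_eq]
      congr 1
      · -- first sums agree: extra top term vanishes
        conv_rhs => rw [Finset.sum_range_succ]
        rw [catA_big (n - 1) (n + 1) (by omega)]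
        norm_num
      · -- second: shift index
        conv_rhs => rw [Finset.sum_range_succ']
        have h0 : (catA (n - 1) (((0 : ℕ) : ℤ) - 1) : ℝ) = 0 := by
          norm_num [catA_negone]
        rw [h0]
        norm_num
        refine Finset.sum_congr rfl fun i _ => ?_
        congr 2
        push_cast
        ring

noncomputable def Ssum (N : ℕ) (m : ℤ) : ℝ :=
  ∑ r ∈ Finset.range N, (-1 : ℝ) ^ r *
    Real.sin ((m : ℝ) * ((2 * (r : ℝ) + 1) * Real.pi / (2 * (N : ℝ))))

lemma neg_one_zpow_two_mul_add (c d : ℤ) : ((-1 : ℝ)) ^ (2 * c + d) = (-1) ^ d := by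
  rw [zpow_add₀ (by norm_num : (-1 : ℝ) ≠ 0),
    show ((-1 : ℝ)) ^ (2 * c) = 1 from Even.neg_one_zpow ⟨c, by ring⟩, one_mul]

lemma lemB1 (N : ℕ) (hN : 0 < N) (t : ℤ) :
    Ssum N ((2 * t + 1) * N) = (N : ℝ) * (-1 : ℝ) ^ t := by
  unfold Ssum
  have hNR : (N : ℝ) ≠ 0 := Nat.cast_ne_zero.mpr hN.ne'
  have key : ∀ r : ℕ, (((2 * t + 1) * (N : ℤ) : ℤ) : ℝ) *
      ((2 * (r : ℝ) + 1) * Real.pi / (2 * (N : ℝ)))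
      = Real.pi / 2 + ((2 * t * r + t + r : ℤ) : ℝ) * Real.pi := by
    intro r
    push_cast
    field_simp
    ring
  have hterm : ∀ r : ℕ, r ∈ Finset.range N → (-1 : ℝ) ^ r *
      Real.sin ((((2 * t + 1) * (N : ℤ) : ℤ) : ℝ) *
        ((2 * (r : ℝ) + 1) * Real.pi / (2 * (N : ℝ)))) = (-1 : ℝ) ^ t := by
    intro r _
    rw [key r, Real.sin_add_int_mul_pi, Real.sin_pi_div_two]
    rw [show ((-1 : ℝ)) ^ r = ((-1 : ℝ)) ^ (r : ℤ) from (zpow_natCast _ r).symm,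
      mul_one, ← zpow_add₀ (by norm_num : (-1 : ℝ) ≠ 0)]
    rw [show (r : ℤ) + (2 * t * r + t + r) = 2 * (t * r + r) + t by ring,
      zpow_add₀ (by norm_num : (-1 : ℝ) ≠ 0)]
    rw [show ((-1 : ℝ)) ^ (2 * (t * r + r)) = 1 from Even.neg_one_zpow ⟨t * r + r, by ring⟩]
    ring
  rw [Finset.sum_congr rfl hterm, Finset.sum_const, Finset.card_range]
  simp [mul_comm]

lemma lemB2 (N : ℕ) (hN : 0 < N) (m : ℤ) (hpar : (2 : ℤ) ∣ (m + N))
    (hdvd : ¬ (2 * (N : ℤ)) ∣ (m + N)) : Ssum N m = 0 := by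
  unfold Ssum
  have hNR : (N : ℝ) ≠ 0 := Nat.cast_ne_zero.mpr hN.ne'
  set α : ℝ := ((m : ℝ) + N) * Real.pi / N with hα
  set β : ℝ := (m : ℝ) * Real.pi / (2 * N) with hβ
  -- rewrite each term as sin (r α + β)
  have hterm : ∀ r : ℕ, r ∈ Finset.range N → (-1 : ℝ) ^ r *
      Real.sin ((m : ℝ) * ((2 * (r : ℝ) + 1) * Real.pi / (2 * (N : ℝ))))
      = Real.sin ((r : ℝ) * α + β) := by
    intro r _
    have harg : (r : ℝ) * α + β =
        (m : ℝ) * ((2 * (r : ℝ) + 1) * Real.pi / (2 * (N : ℝ))) + (r : ℤ) * Real.pi := by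
      rw [hα, hβ]
      push_cast
      field_simp
      ring
    rw [harg, Real.sin_add_int_mul_pi]
    rw [show ((-1 : ℝ)) ^ (r : ℤ) = ((-1 : ℝ)) ^ r from zpow_natCast _ r]
  rw [Finset.sum_congr rfl hterm]
  -- sin(α/2) ≠ 0
  have hs : Real.sin (α / 2) ≠ 0 := by
    intro h
    obtain ⟨n, hn⟩ := Real.sin_eq_zero_iff.mp h
    apply hdvd
    refine ⟨n, ?_⟩
    have hpi : Real.pi ≠ 0 := Real.pi_ne_zero
    rw [hα] at hn
    have : (n : ℝ) * (2 * N) = (m : ℝ) + N := by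
      field_simp at hn
      have h0 : ((n : ℝ) * (2 * N) - ((m : ℝ) + N)) * Real.pi = 0 := by linear_combination Real.pi * hn
      rcases mul_eq_zero.mp h0 with h1 | h1
      · linarith
      · exact absurd h1 hpi
    have h2 : ((n * (2 * N) : ℤ) : ℝ) = ((m + N : ℤ) : ℝ) := by push_cast; linarith
    have h3 : n * (2 * N) = m + N := by exact_mod_cast h2
    linarith [h3]
  -- telescoping
  have tel : (2 * Real.sin (α / 2)) * ∑ r ∈ Finset.range N, Real.sin ((r : ℝ) * α + β)
      = Real.cos ((0 : ℝ) * α - α / 2 + β) - Real.cos ((N : ℝ) * α - α / 2 + β) := by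
    rw [Finset.mul_sum]
    have : ∀ r : ℕ, (2 * Real.sin (α / 2)) * Real.sin ((r : ℝ) * α + β)
        = Real.cos ((r : ℝ) * α - α / 2 + β) - Real.cos (((r : ℝ) + 1) * α - α / 2 + β) := by
      intro r
      rw [Real.cos_sub_cos]
      rw [show (((r : ℝ) * α - α / 2 + β) + (((r : ℝ) + 1) * α - α / 2 + β)) / 2
            = (r : ℝ) * α + β by ring,
          show (((r : ℝ) * α - α / 2 + β) - (((r : ℝ) + 1) * α - α / 2 + β)) / 2
            = -(α / 2) by ring,
          Real.sin_neg]
      ring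
    rw [Finset.sum_congr rfl fun r _ => this r]
    have := Finset.sum_range_sub' (fun r : ℕ => Real.cos ((r : ℝ) * α - α / 2 + β)) N
    push_cast at this ⊢
    linarith [this]
  -- RHS of telescoping is 0
  obtain ⟨c, hc⟩ := hpar
  have hNα : (N : ℝ) * α = ((m : ℝ) + N) * Real.pi := by
    rw [hα]; field_simp
  have hzero : Real.cos ((0 : ℝ) * α - α / 2 + β) - Real.cos ((N : ℝ) * α - α / 2 + β) = 0 := by
    rw [Real.cos_sub_cos]
    have : (((0 : ℝ) * α - α / 2 + β) - ((N : ℝ) * α - α / 2 + β)) / 2 = -((c : ℝ) * Real.pi) := by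
      have hmc : (m : ℝ) + N = 2 * c := by exact_mod_cast congrArg (Int.cast : ℤ → ℝ) hc
      rw [show (((0 : ℝ) * α - α / 2 + β) - ((N : ℝ) * α - α / 2 + β)) / 2
            = -((N : ℝ) * α) / 2 by ring, hNα, hmc]
      ring
    rw [this, Real.sin_neg, Real.sin_int_mul_pi]
    ring
  have := tel.trans hzero
  rcases mul_eq_zero.mp this with h | h
  · exact absurd (by linarith : Real.sin (α / 2) = 0) hs
  · exact h

/-- For `ℓ = (2k+1)N`:
`2^ℓ p_ℓ^{(N)} = ∑_{s=1}^{2k} (-1)^{k-s} A(ℓ-1, sN) + 2(-1)^k`. -/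
theorem two_pow_mul_probNum_odd_multiple (N k : ℕ) (hN : 2 ≤ N) :
    (2 : ℝ) ^ ((2 * k + 1) * N) * probNum N ((2 * k + 1) * N) =
      (∑ s ∈ Finset.Icc 1 (2 * k),
        (-1 : ℝ) ^ ((k : ℤ) - (s : ℤ)) * (catA ((2 * k + 1) * N - 1) ((s : ℤ) * N) : ℝ)) +
        2 * (-1 : ℝ) ^ k := by
  have hN0 : 0 < N := by omega
  set ℓ : ℕ := (2 * k + 1) * N with hℓ
  have hℓ1 : 1 ≤ ℓ := by
    have : 1 * 1 ≤ (2 * k + 1) * N := Nat.mul_le_mul (by omega) (by omega)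
    omega
  have hℓ0 : ℓ ≠ 0 := by omega
  have hNR : (N : ℝ) ≠ 0 := Nat.cast_ne_zero.mpr hN0.ne'
  set F : ℕ → ℝ := fun j => (catA (ℓ - 1) (j : ℤ) : ℝ) * Ssum N ((ℓ : ℤ) - 2 * j) with hF
  -- Step 1
  have e1 : (2 : ℝ) ^ ℓ * probNum N ℓ = (1 / N) * ∑ j ∈ Finset.range (ℓ + 1), F j := by
    rw [probNum, if_neg hℓ0, ← mul_assoc, mul_comm ((2:ℝ)^ℓ) (1/(N:ℝ)), mul_assoc]
    congr 1
    rw [Finset.mul_sum]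
    calc ∑ r ∈ Finset.range N, (2:ℝ)^ℓ *
          ((-1 : ℝ) ^ r * Real.sin ((2 * r + 1) * Real.pi / (2 * N)) *
            Real.cos ((2 * r + 1) * Real.pi / (2 * N)) ^ (ℓ - 1))
        = ∑ r ∈ Finset.range N, ∑ j ∈ Finset.range (ℓ + 1),
            (catA (ℓ - 1) (j : ℤ) : ℝ) * ((-1 : ℝ) ^ r *
              Real.sin ((((ℓ : ℤ) - 2 * j : ℤ) : ℝ) *
                ((2 * (r : ℝ) + 1) * Real.pi / (2 * (N : ℝ))))) := by
          refine Finset.sum_congr rfl fun r _ => ?_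
          rw [show (2:ℝ)^ℓ * ((-1 : ℝ) ^ r * Real.sin ((2 * r + 1) * Real.pi / (2 * N)) *
                Real.cos ((2 * r + 1) * Real.pi / (2 * N)) ^ (ℓ - 1))
              = (-1 : ℝ) ^ r * ((2:ℝ)^ℓ * (Real.sin ((2 * r + 1) * Real.pi / (2 * N)) *
                Real.cos ((2 * r + 1) * Real.pi / (2 * N)) ^ (ℓ - 1))) by ring,
            lemA ℓ hℓ1 _, Finset.mul_sum]
          refine Finset.sum_congr rfl fun j _ => ?_
          rw [show (-1 : ℝ) ^ r * ((catA (ℓ - 1) (j : ℤ) : ℝ) *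
              Real.sin (((ℓ : ℝ) - 2 * j) * ((2 * r + 1) * Real.pi / (2 * N))))
              = (catA (ℓ - 1) (j : ℤ) : ℝ) * ((-1 : ℝ) ^ r *
                Real.sin (((ℓ : ℝ) - 2 * j) * ((2 * r + 1) * Real.pi / (2 * N)))) by ring]
          congr 2
          push_cast
          ring
      _ = ∑ j ∈ Finset.range (ℓ + 1), F j := by
          rw [Finset.sum_comm]
          refine Finset.sum_congr rfl fun j _ => ?_
          rw [hF]
          simp only [Ssum, Finset.mul_sum]
  rw [e1]
  -- Step 2: restrict to multiples of N
  have hsub : Finset.image (· * N) (Finset.range (2 * k + 2)) ⊆ Finset.range (ℓ + 1) := by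
    intro j hj
    obtain ⟨s, hs, rfl⟩ := Finset.mem_image.mp hj
    rw [Finset.mem_range] at hs ⊢
    have : s * N ≤ (2 * k + 1) * N := Nat.mul_le_mul_right N (by omega)
    omega
  have hvanish : ∀ j ∈ Finset.range (ℓ + 1),
      j ∉ Finset.image (· * N) (Finset.range (2 * k + 2)) → F j = 0 := by
    intro j hj hnotim
    have hndvd : ¬ N ∣ j := by
      rintro ⟨s, rfl⟩
      apply hnotim
      refine Finset.mem_image.mpr ⟨s, Finset.mem_range.mpr ?_, mul_comm s N⟩
      rw [Finset.mem_range] at hj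
      by_contra hle
      have h1 : (2 * k + 2) * N ≤ s * N := Nat.mul_le_mul_right N (by omega)
      have h2 : N * s = s * N := Nat.mul_comm _ _
      have h3 : (2 * k + 1) * N + N = (2 * k + 2) * N := by ring
      omega
    have hzero : Ssum N ((ℓ : ℤ) - 2 * j) = 0 := by
      apply lemB2 N hN0
      · exact ⟨((k : ℤ) + 1) * N - j, by push_cast [hℓ]; ring⟩
      · rintro ⟨c, hc⟩
        apply hndvd
        have hjc : 2 * (j : ℤ) = 2 * ((N : ℤ) * ((k : ℤ) + 1 - c)) := by
          push_cast [hℓ] at hc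
          linear_combination -hc
        have hjc2 : (j : ℤ) = (N : ℤ) * ((k : ℤ) + 1 - c) :=
          mul_left_cancel₀ two_ne_zero hjc
        have : (N : ℤ) ∣ (j : ℤ) := ⟨_, hjc2⟩
        exact_mod_cast this
    rw [hF]
    simp [hzero]
  rw [← Finset.sum_subset hsub hvanish,
    Finset.sum_image (fun a _ b _ h => Nat.eq_of_mul_eq_mul_right hN0 h)]
  -- Step 3: evaluate F (s * N)
  have e3 : ∀ s : ℕ, F (s * N) =
      (catA (ℓ - 1) ((s : ℤ) * N) : ℝ) * ((N : ℝ) * (-1 : ℝ) ^ ((k : ℤ) - s)) := by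
    intro s
    simp only [hF]
    have hm : (ℓ : ℤ) - 2 * (s * N : ℕ) = (2 * ((k : ℤ) - s) + 1) * N := by
      push_cast [hℓ]; ring
    rw [hm, lemB1 N hN0]
    push_cast
    ring
  rw [Finset.sum_congr rfl fun s _ => e3 s]
  -- Step 4: pull out 1/N and peel edge terms
  have e4 : (1 / (N : ℝ)) * ∑ s ∈ Finset.range (2 * k + 2),
      (catA (ℓ - 1) ((s : ℤ) * N) : ℝ) * ((N : ℝ) * (-1 : ℝ) ^ ((k : ℤ) - s)) =
      ∑ s ∈ Finset.range (2 * k + 2),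
        (-1 : ℝ) ^ ((k : ℤ) - (s : ℤ)) * (catA (ℓ - 1) ((s : ℤ) * N) : ℝ) := by
    rw [Finset.mul_sum]
    refine Finset.sum_congr rfl fun s _ => ?_
    field_simp
  rw [e4, Finset.sum_range_succ, Finset.sum_range_succ']
  -- middle sum matches Icc
  have emid : ∑ i ∈ Finset.range (2 * k),
      (-1 : ℝ) ^ ((k : ℤ) - ((i + 1 : ℕ) : ℤ)) * (catA (ℓ - 1) (((i + 1 : ℕ) : ℤ) * N) : ℝ)
      = ∑ s ∈ Finset.Icc 1 (2 * k),
        (-1 : ℝ) ^ ((k : ℤ) - (s : ℤ)) * (catA (ℓ - 1) ((s : ℤ) * N) : ℝ) := by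
    rw [← Finset.Ico_add_one_right_eq_Icc, Finset.sum_Ico_eq_sum_range]
    refine Finset.sum_congr (by norm_num) fun i _ => ?_
    rw [Nat.add_comm 1 i]
  -- edge terms
  have h0' : (-1 : ℝ) ^ ((k : ℤ) - ((0 : ℕ) : ℤ)) * (catA (ℓ - 1) (((0 : ℕ) : ℤ) * N) : ℝ)
      = (-1 : ℝ) ^ k := by
    norm_num [catA_zero']
  have htop : (-1 : ℝ) ^ ((k : ℤ) - ((2 * k + 1 : ℕ) : ℤ)) *
      (catA (ℓ - 1) (((2 * k + 1 : ℕ) : ℤ) * N) : ℝ) = (-1 : ℝ) ^ k := by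
    have hcast : ((2 * k + 1 : ℕ) : ℤ) * N = ((ℓ - 1 : ℕ) : ℤ) + 1 := by
      push_cast [hℓ, Nat.cast_sub hℓ1]
      rw [Nat.cast_sub (show 1 ≤ (2 * k + 1) * N from hℓ1)]
      push_cast
      ring
    rw [hcast, catA_top]
    have hsign : (k : ℤ) - ((2 * k + 1 : ℕ) : ℤ) = 2 * (-(k : ℤ) - 1) + ((k : ℤ) + 1) := by
      push_cast; ring
    rw [hsign, neg_one_zpow_two_mul_add]
    have : ((k : ℤ) + 1) = ((k + 1 : ℕ) : ℤ) := by push_cast; ring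
    rw [this, zpow_natCast, pow_succ]
    norm_num
  rw [emid, h0', htop]
  ring
end

section
/- Let N ≥ 2 be an integer. For every integer k with 0 ≤ k ≤ N−1, 2^{N+2k−1} · p_{N+2k}^{(N)} = Σ ∏_{i=1}^{N} C_{j_i}, where the sum extends over all N-tuples (j_1,…,j_N) of nonnegative integers with j_1 + ⋯ + j_N = k and C_m = binom(2m,m)/(m+1) is the m-th Catalan number. In other words, the first N nonzero terms of the sequence q_ℓ^{(N)} = 2^{ℓ−1} p_ℓ^{(N)} agree with the first N terms of the N-th convolution power of the Catalan sequence. -/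
open Finset PowerSeries

lemma sum_antidiagonalTuple_succ {M : Type*} [AddCommMonoid M] (N k : ℕ)
    (g : (Fin (N+1) → ℕ) → M) :
    ∑ j ∈ Finset.Nat.antidiagonalTuple (N+1) k, g j
      = ∑ pq ∈ Finset.HasAntidiagonal.antidiagonal k, ∑ x ∈ Finset.Nat.antidiagonalTuple N pq.2,
          g (Fin.cons pq.1 x) := by
  rw [← Finset.sum_sigma (f := fun (z : (_ : ℕ×ℕ) × (Fin N → ℕ)) => g (Fin.cons z.1.1 z.2))]
  apply Finset.sum_nbij' (i := fun j => ⟨(j 0, ∑ i, Fin.tail j i), Fin.tail j⟩)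
    (j := fun x => Fin.cons x.1.1 x.2)
  · intro a ha
    rw [Finset.Nat.mem_antidiagonalTuple] at ha
    simp only [Finset.mem_sigma, Finset.HasAntidiagonal.mem_antidiagonal, Finset.Nat.mem_antidiagonalTuple]
    refine ⟨by rw [← ha, Fin.sum_univ_succ]; rfl, trivial⟩
  · intro a ha
    simp only [Finset.mem_sigma, Finset.HasAntidiagonal.mem_antidiagonal,
      Finset.Nat.mem_antidiagonalTuple] at ha ⊢
    rw [Fin.sum_cons, ha.2, ha.1]
  · intro a ha; simp [Fin.cons_self_tail]
  · intro a ha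
    simp only [Finset.mem_sigma, Finset.HasAntidiagonal.mem_antidiagonal,
      Finset.Nat.mem_antidiagonalTuple] at ha
    ext1
    · have h2 : (∑ i, Fin.tail (Fin.cons a.1.1 a.2 : Fin (N+1) → ℕ) i) = a.1.2 := by
        rw [Fin.tail_cons, ha.2]
      refine Prod.ext ?_ h2
      simp
    · simp [Fin.tail_cons]
  · intro a ha; rw [Fin.cons_self_tail]

noncomputable def catPS : PowerSeries ℕ := PowerSeries.mk fun n => catalan n

lemma catPS_eq : catPS = 1 + PowerSeries.X * catPS ^ 2 := by
  ext n
  cases n with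
  | zero => simp [catPS]
  | succ n =>
    rw [map_add, PowerSeries.coeff_succ_X_mul]
    simp only [catPS, PowerSeries.coeff_mk, pow_two, PowerSeries.coeff_mul,
      PowerSeries.coeff_one, catalan_succ']
    simp

lemma coeff_catPS_pow (N k : ℕ) :
    PowerSeries.coeff k (catPS ^ N)
      = ∑ j ∈ Finset.Nat.antidiagonalTuple N k, ∏ i : Fin N, catalan (j i) := by
  induction N generalizing k with
  | zero =>
    cases k with
    | zero => simp
    | succ k => simp [PowerSeries.coeff_one]
  | succ N ih =>
    rw [pow_succ', PowerSeries.coeff_mul, sum_antidiagonalTuple_succ]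
    apply Finset.sum_congr rfl
    intro pq _
    rw [ih pq.2, Finset.mul_sum]
    apply Finset.sum_congr rfl
    intro x _
    rw [Fin.prod_univ_succ]
    simp [catPS]

lemma catPS_pow_succ (N : ℕ) :
    catPS^(N+1) = catPS^N + PowerSeries.X * catPS^(N+2) := by
  calc catPS^(N+1) = catPS^N * (1 + PowerSeries.X * catPS^2) := by rw [← catPS_eq, pow_succ]
  _ = catPS^N + PowerSeries.X * catPS^(N+2) := by ring

lemma coeff_zero_catPS_pow (N : ℕ) : PowerSeries.coeff 0 (catPS^N) = 1 := by
  rw [PowerSeries.coeff_zero_eq_constantCoeff, map_pow]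
  have : PowerSeries.constantCoeff catPS = 1 := by simp [catPS]
  rw [this, one_pow]

lemma coeff_succ_catPS_pow (N k : ℕ) :
    PowerSeries.coeff (k+1) (catPS^(N+1))
      = PowerSeries.coeff (k+1) (catPS^N) + PowerSeries.coeff k (catPS^(N+2)) := by
  rw [catPS_pow_succ, map_add, PowerSeries.coeff_succ_X_mul]

lemma key_choose (k : ℕ) : ∀ N : ℕ,
    PowerSeries.coeff k (catPS^(N+1)) + (N+2*k).choose (k+N+1) = (N+2*k).choose k := by
  induction k with
  | zero =>
    intro N
    rw [coeff_zero_catPS_pow, Nat.choose_eq_zero_of_lt (by omega)]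
    simp
  | succ k ihk =>
    intro N
    induction N with
    | zero =>
      have h1 := coeff_succ_catPS_pow 0 k
      have h2 : PowerSeries.coeff (k+1) (catPS^0) = 0 := by
        rw [pow_zero, PowerSeries.coeff_one]; simp
      have h3 := ihk 1
      have p1 : (2*(k+1)).choose (k+2) = (2*k+1).choose (k+1) + (2*k+1).choose (k+2) := by
        have : 2*(k+1) = (2*k+1)+1 := by ring
        rw [this]; exact Nat.choose_succ_succ _ _
      have p2 : (2*(k+1)).choose (k+1) = (2*k+1).choose k + (2*k+1).choose (k+1) := by
        have : 2*(k+1) = (2*k+1)+1 := by ring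
        rw [this]; exact Nat.choose_succ_succ _ _
      have e1 : (0+2*(k+1)) = 2*(k+1) := by ring
      have e2 : (1+2*k) = 2*k+1 := by ring
      rw [e1] at *
      rw [e2] at h3
      have e3 : k+1+0+1 = k+2 := by ring
      have e4 : k+1+1 = k+2 := by ring
      rw [e3]
      rw [e4] at h3
      norm_num at h1 h2 h3 p1 p2 ⊢
      omega
    | succ N ihN =>
      have h1 := coeff_succ_catPS_pow (N+1) k
      have h3 := ihk (N+2)
      have p1 : (N+1+2*(k+1)).choose (k+1+(N+1)+1)
          = (N+2*(k+1)).choose (k+1+N+1) + (N+2*(k+1)).choose (k+1+N+2) := by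
        have e : N+1+2*(k+1) = (N+2*(k+1))+1 := by ring
        have e2 : k+1+(N+1)+1 = (k+1+N+1)+1 := by ring
        rw [e, e2, Nat.choose_succ_succ]
      have p2 : (N+1+2*(k+1)).choose (k+1)
          = (N+2*(k+1)).choose k + (N+2*(k+1)).choose (k+1) := by
        have e : N+1+2*(k+1) = (N+2*(k+1))+1 := by ring
        rw [e, Nat.choose_succ_succ]
      ring_nf at h1 h3 ihN p1 p2 ⊢
      omega

noncomputable def trigS (N : ℕ) (c : ℤ) : ℝ :=
  ∑ j ∈ Finset.range N, (-1:ℝ)^j * Real.sin ((2*j+1) * c * Real.pi / (2*N))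

lemma trigS_self (N : ℕ) (hN : 1 ≤ N) : trigS N N = N := by
  have hN0 : (N:ℝ) ≠ 0 := Nat.cast_ne_zero.mpr (by omega)
  rw [trigS]
  have : ∀ j ∈ Finset.range N, (-1:ℝ)^j * Real.sin ((2*j+1) * (N:ℤ) * Real.pi / (2*N)) = 1 := by
    intro j _
    have harg : (2*(j:ℝ)+1) * ((N:ℤ):ℝ) * Real.pi / (2*N) = (j:ℝ)*Real.pi + Real.pi/2 := by
      push_cast
      field_simp
    rw [harg, Real.sin_add, Real.sin_nat_mul_pi, Real.cos_pi_div_two, Real.sin_pi_div_two]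
    have : Real.cos ((j:ℝ)*Real.pi) = (-1)^j := by
      have := Real.cos_nat_mul_pi_sub 0 j
      simpa using this
    rw [this]
    have : ((-1:ℝ)^j)^2 = 1 := by
      rw [← pow_mul, pow_mul']
      norm_num
    nlinarith [this]
  rw [Finset.sum_congr rfl this]
  simp

lemma trigS_neg (N : ℕ) (c : ℤ) : trigS N (-c) = - trigS N c := by
  rw [trigS, trigS, ← Finset.sum_neg_distrib]
  apply Finset.sum_congr rfl
  intro j _
  have : (2*(j:ℝ)+1) * ((-c:ℤ):ℝ) * Real.pi / (2*N) = -((2*j+1) * (c:ℝ) * Real.pi / (2*N)) := by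
    push_cast; ring
  rw [this, Real.sin_neg]
  ring

lemma trigS_eq_zero (N : ℕ) (hN : 1 ≤ N) (c : ℤ) (h : ∀ s : ℤ, c ≠ N*(2*s+1)) :
    trigS N c = 0 := by
  have hN0 : (N:ℝ) ≠ 0 := Nat.cast_ne_zero.mpr (by omega)
  set α : ℝ := c * Real.pi / (2*N) with hα
  have hcos : Real.cos α ≠ 0 := by
    intro h0
    rw [Real.cos_eq_zero_iff] at h0
    obtain ⟨n, hn⟩ := h0
    apply h n
    rw [hα] at hn
    have h3 : (c:ℝ) * Real.pi / (2*N) = (2*n+1)*Real.pi/2 := hn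
    field_simp at h3
    have h2 : (c:ℝ) * (Real.pi*2) = ((N:ℝ)*(2*n+1)) * (Real.pi*2) := by
      linear_combination (Real.pi*2) * h3
    have h4 : (c:ℝ) = (N:ℝ)*(2*n+1) :=
      mul_right_cancel₀ (by positivity) h2
    exact_mod_cast h4
  set x : ℂ := -Complex.exp ((2*α:ℝ) * Complex.I) with hx
  have hxne : x ≠ 1 := by
    intro h1
    have h2 : Complex.exp ((2*α:ℝ) * Complex.I) = -1 := by
      rw [hx] at h1
      linear_combination -h1
    have h3 : Real.cos (2*α) = -1 := by
      have := Complex.exp_ofReal_mul_I_re (2*α)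
      rw [h2] at this
      simpa using this.symm
    have h5 := Real.cos_sq α
    rw [h3] at h5
    have h4 : Real.cos α ^ 2 = 0 := by linarith
    exact hcos (pow_eq_zero_iff (n := 2) (by norm_num) |>.mp h4)
  have key : ∀ j : ℕ, Complex.exp ((α:ℝ) * Complex.I) * x^j
      = (((-1:ℝ)^j : ℝ) : ℂ) * Complex.exp (((2*j+1) * c * Real.pi / (2*N) : ℝ) * Complex.I) := by
    intro j
    have h1 : x^j = (-1:ℂ)^j * Complex.exp (((2*j*α:ℝ)) * Complex.I) := by
      rw [hx, neg_pow, ← Complex.exp_nat_mul]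
      congr 2
      push_cast
      ring
    rw [h1]
    have h2 : Complex.exp ((α:ℝ) * Complex.I) * Complex.exp (((2*j*α:ℝ)) * Complex.I)
        = Complex.exp (((2*j+1) * c * Real.pi / (2*N) : ℝ) * Complex.I) := by
      rw [← Complex.exp_add]
      congr 1
      rw [hα]
      push_cast
      field_simp
      ring
    have hcast : (((-1:ℝ)^j : ℝ) : ℂ) = (-1:ℂ)^j := by push_cast; ring
    rw [hcast]
    linear_combination ((-1:ℂ))^j * h2
  have hS1 : trigS N c = (∑ j ∈ Finset.range N, Complex.exp ((α:ℝ) * Complex.I) * x^j).im := by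
    rw [trigS, Complex.im_sum]
    apply Finset.sum_congr rfl
    intro j _
    rw [key j, Complex.im_ofReal_mul, Complex.exp_ofReal_mul_I_im]
  set ε : ℝ := (-1:ℝ)^N * (-1:ℝ)^c with hε
  have hxN : x^N = ((ε : ℝ) : ℂ) := by
    rw [hx, neg_pow, ← Complex.exp_nat_mul]
    have h2 : (N:ℂ) * ((2*α:ℝ) * Complex.I) = (c:ℂ) * (Real.pi * Complex.I) := by
      rw [hα]
      have hNC : (N:ℂ) ≠ 0 := Nat.cast_ne_zero.mpr (by omega)
      push_cast
      field_simp
    rw [h2, Complex.exp_int_mul, Complex.exp_pi_mul_I, hε]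
    push_cast [Complex.ofReal_zpow]
    ring
  have hx1 : x - 1 = -Complex.exp ((α:ℝ)*Complex.I) * (2*(Real.cos α : ℂ)) := by
    have h2 : Complex.exp ((2*α:ℝ)*Complex.I)
        = Complex.exp ((α:ℝ)*Complex.I) * Complex.exp ((α:ℝ)*Complex.I) := by
      rw [← Complex.exp_add]
      congr 1
      push_cast
      ring
    rw [hx, h2, Complex.exp_mul_I, ← Complex.ofReal_cos, ← Complex.ofReal_sin]
    have pyth : ((Real.sin α : ℂ))^2 + ((Real.cos α : ℂ))^2 = 1 := by
      exact_mod_cast congrArg (fun r : ℝ => (r : ℂ)) (Real.sin_sq_add_cos_sq α)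
    linear_combination pyth - ((Real.sin α : ℂ))^2 * Complex.I_sq
  have hgeo : (∑ j ∈ Finset.range N, x^j) = (((ε : ℝ):ℂ) - 1) / (x - 1) := by
    rw [geom_sum_eq hxne, hxN]
  have hfin : (∑ j ∈ Finset.range N, Complex.exp ((α:ℝ) * Complex.I) * x^j)
      = (((ε - 1)/(-2*Real.cos α) : ℝ) : ℂ) := by
    rw [← Finset.mul_sum, hgeo, hx1]
    have he : Complex.exp ((α:ℝ)*Complex.I) ≠ 0 := Complex.exp_ne_zero _
    have hrw : -Complex.exp ((α:ℝ)*Complex.I) * (2*(Real.cos α:ℂ))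
        = Complex.exp ((α:ℝ)*Complex.I) * (-(2*(Real.cos α:ℂ))) := by ring
    rw [hrw, ← mul_div_assoc, mul_div_mul_left _ _ he]
    push_cast
    ring
  rw [hS1, hfin, Complex.ofReal_im]

lemma two_cos_pow_s13 (x : ℝ) (m : ℕ) :
    (2*Real.cos x)^m
      = ∑ r ∈ Finset.range (m+1), (Nat.choose m r : ℝ) * Real.cos ((2*(r:ℝ)-m) * x) := by
  have h1 : ((2*Real.cos x : ℝ):ℂ)
      = Complex.exp ((x:ℝ)*Complex.I) + Complex.exp ((-x:ℝ)*Complex.I) := by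
    rw [Complex.exp_mul_I, Complex.exp_mul_I, ← Complex.ofReal_cos, ← Complex.ofReal_sin,
      ← Complex.ofReal_cos, ← Complex.ofReal_sin, Real.cos_neg, Real.sin_neg]
    push_cast
    ring
  have h2 : ((2*Real.cos x : ℝ):ℂ)^m
      = ∑ r ∈ Finset.range (m+1),
          ((Nat.choose m r : ℝ):ℂ) * Complex.exp (((2*(r:ℝ)-m) * x : ℝ) * Complex.I) := by
    rw [h1, add_pow]
    refine Finset.sum_congr rfl fun r hr => ?_
    have hrm : r ≤ m := by
      have := Finset.mem_range.mp hr; omega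
    have e1 : Complex.exp ((x:ℝ)*Complex.I)^r = Complex.exp ((r*x : ℝ) * Complex.I) := by
      rw [← Complex.exp_nat_mul]
      congr 1
      push_cast
      ring
    have e2 : Complex.exp ((-x:ℝ)*Complex.I)^(m-r)
        = Complex.exp ((-((m:ℝ)-r)*x : ℝ) * Complex.I) := by
      rw [← Complex.exp_nat_mul]
      congr 1
      push_cast [Nat.cast_sub hrm]
      ring
    rw [e1, e2, ← Complex.exp_add]
    have e3 : ((r*x : ℝ) : ℂ) * Complex.I + ((-((m:ℝ)-r)*x : ℝ) : ℂ) * Complex.I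
        = (((2*(r:ℝ)-m) * x : ℝ) : ℂ) * Complex.I := by
      push_cast
      ring
    rw [e3]
    push_cast
    ring
  have h3 := congrArg Complex.re h2
  rw [← Complex.ofReal_pow, Complex.ofReal_re, Complex.re_sum] at h3
  rw [h3]
  refine Finset.sum_congr rfl fun r _ => ?_
  rw [Complex.re_ofReal_mul, Complex.exp_ofReal_mul_I_re]

lemma trig_main (N k : ℕ) (hN : 2 ≤ N) (hk : k ≤ N-1) :
    (2:ℝ)^(N+2*k-1) * ∑ j ∈ Finset.range N,
        (-1:ℝ)^j * Real.sin ((2*j+1)*Real.pi/(2*N))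
          * Real.cos ((2*j+1)*Real.pi/(2*N)) ^ (N+2*k-1)
      = N * ((Nat.choose (N+2*k-1) k : ℝ) - (Nat.choose (N+2*k-1) (k+N) : ℝ)) := by
  set m := N + 2*k - 1 with hm
  have hm1 : m + 1 = N + 2*k := by omega
  set θ : ℕ → ℝ := fun j => (2*j+1)*Real.pi/(2*N) with hθ
  have step1 : (2:ℝ)^m * ∑ j ∈ Finset.range N, (-1:ℝ)^j * Real.sin (θ j) * Real.cos (θ j)^m
      = ∑ j ∈ Finset.range N, ∑ r ∈ Finset.range (m+1),
          (Nat.choose m r : ℝ) * ((-1:ℝ)^j * (Real.sin (θ j) * Real.cos ((2*(r:ℝ)-m) * θ j))) := by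
    rw [Finset.mul_sum]
    refine Finset.sum_congr rfl fun j _ => ?_
    have e : (2:ℝ)^m * ((-1:ℝ)^j * Real.sin (θ j) * Real.cos (θ j)^m)
        = (-1:ℝ)^j * Real.sin (θ j) * (2*Real.cos (θ j))^m := by
      rw [mul_pow]; ring
    rw [e, two_cos_pow_s13, Finset.mul_sum]
    refine Finset.sum_congr rfl fun r _ => ?_
    ring
  have step2 : ∀ r : ℕ, ∑ j ∈ Finset.range N,
      (-1:ℝ)^j * (Real.sin (θ j) * Real.cos ((2*(r:ℝ)-m) * θ j))
      = (trigS N (2*(r:ℤ)-m+1) + trigS N ((m:ℤ)+1-2*r)) / 2 := by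
    intro r
    rw [trigS, trigS, ← Finset.sum_add_distrib, Finset.sum_div]
    refine Finset.sum_congr rfl fun j _ => ?_
    have hsincos : Real.sin (θ j) * Real.cos ((2*(r:ℝ)-m) * θ j)
        = (Real.sin (θ j + (2*(r:ℝ)-m) * θ j) + Real.sin (θ j - (2*(r:ℝ)-m) * θ j))/2 := by
      rw [Real.sin_add, Real.sin_sub]; ring
    rw [hsincos]
    have e1 : θ j + (2*(r:ℝ)-m) * θ j
        = (2*j+1) * ((2*(r:ℤ)-m+1 : ℤ):ℝ) * Real.pi / (2*N) := by
      rw [hθ]; push_cast; ring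
    have e2 : θ j - (2*(r:ℝ)-m) * θ j
        = (2*j+1) * (((m:ℤ)+1-2*r : ℤ):ℝ) * Real.pi / (2*N) := by
      rw [hθ]; push_cast; ring
    rw [e1, e2]
    ring
  have hrefl : ∑ r ∈ Finset.range (m+1), (Nat.choose m r : ℝ) * trigS N (2*(r:ℤ)-m+1)
      = ∑ r ∈ Finset.range (m+1), (Nat.choose m r : ℝ) * trigS N ((m:ℤ)+1-2*r) := by
    rw [← Finset.sum_range_reflect (fun r => (Nat.choose m r : ℝ) * trigS N (2*(r:ℤ)-m+1)) (m+1)]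
    refine Finset.sum_congr rfl fun j hj => ?_
    have hjm : j ≤ m := by
      have := Finset.mem_range.mp hj; omega
    have hsub : m + 1 - 1 - j = m - j := by omega
    rw [hsub, Nat.choose_symm hjm]
    congr 2
    push_cast [Nat.cast_sub hjm]
    ring
  have heval : ∑ r ∈ Finset.range (m+1), (Nat.choose m r : ℝ) * trigS N ((m:ℤ)+1-2*r)
      = N * ((Nat.choose m k : ℝ) - (Nat.choose m (k+N) : ℝ)) := by
    have hext : ∑ r ∈ Finset.range (m+1), (Nat.choose m r : ℝ) * trigS N ((m:ℤ)+1-2*r)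
        = ∑ r ∈ Finset.range (m+N+1), (Nat.choose m r : ℝ) * trigS N ((m:ℤ)+1-2*r) := by
      apply Finset.sum_subset (Finset.range_subset_range.mpr (by omega))
      intro r hr hnr
      have : m < r := by
        simp only [Finset.mem_range] at hr hnr
        omega
      rw [Nat.choose_eq_zero_of_lt this]
      simp
    have hpair : ∑ r ∈ ({k, k+N} : Finset ℕ), (Nat.choose m r : ℝ) * trigS N ((m:ℤ)+1-2*r)
        = ∑ r ∈ Finset.range (m+N+1), (Nat.choose m r : ℝ) * trigS N ((m:ℤ)+1-2*r) := by
      apply Finset.sum_subset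
      · intro r hr
        simp only [Finset.mem_insert, Finset.mem_singleton] at hr
        rw [Finset.mem_range]
        rcases hr with h1 | h1 <;> omega
      · intro r hr hnr
        simp only [Finset.mem_insert, Finset.mem_singleton, not_or] at hnr
        obtain ⟨hr1, hr2⟩ := hnr
        by_cases hle : m < r
        · rw [Nat.choose_eq_zero_of_lt hle]; simp
        · push_neg at hle
          have hz : trigS N ((m:ℤ)+1-2*r) = 0 := by
            apply trigS_eq_zero N (by omega)
            intro s heq
            have hexp : (N:ℤ)*(2*s+1) = 2*((N:ℤ)*s) + N := by ring
            have hNs : (k:ℤ) - r = N * s := by omega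
            have hNpos : (0:ℤ) < N := by exact_mod_cast (by omega : 0 < N)
            have hub : (N:ℤ) * s < N * 1 := by
              rw [← hNs]
              have : (k:ℤ) < N := by exact_mod_cast (by omega : k < N)
              omega
            have hlb : (N:ℤ) * (-2) < N * s := by
              rw [← hNs]
              have h1 : (r:ℤ) ≤ m := by exact_mod_cast hle
              have h2 : (m:ℤ) = N + 2*k - 1 := by omega
              omega
            have hs1 : s < 1 := lt_of_mul_lt_mul_left hub (by omega)
            have hs2 : -2 < s := lt_of_mul_lt_mul_left hlb (by omega)
            interval_cases s
            · rw [mul_neg_one] at heq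
              have : (r:ℤ) = k + N := by omega
              exact hr2 (by exact_mod_cast this)
            · rw [mul_zero] at heq
              omega
          rw [hz]; simp
    rw [hext, ← hpair]
    rw [Finset.sum_pair (show k ≠ k + N by omega)]
    have ha1 : ((m:ℤ)+1-2*k) = N := by omega
    have ha2 : ((m:ℤ)+1-2*((k+N:ℕ):ℤ)) = -(N:ℤ) := by push_cast; omega
    rw [ha1, ha2, trigS_neg, trigS_self N (by omega)]
    ring
  calc (2:ℝ)^m * ∑ j ∈ Finset.range N, (-1:ℝ)^j * Real.sin (θ j) * Real.cos (θ j)^m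
      = ∑ j ∈ Finset.range N, ∑ r ∈ Finset.range (m+1),
          (Nat.choose m r : ℝ) * ((-1:ℝ)^j * (Real.sin (θ j) * Real.cos ((2*(r:ℝ)-m) * θ j))) := step1
    _ = ∑ r ∈ Finset.range (m+1), (Nat.choose m r : ℝ)
          * ((trigS N (2*(r:ℤ)-m+1) + trigS N ((m:ℤ)+1-2*r)) / 2) := by
        rw [Finset.sum_comm]
        refine Finset.sum_congr rfl fun r _ => ?_
        rw [← Finset.mul_sum, step2 r]
    _ = (∑ r ∈ Finset.range (m+1), (Nat.choose m r : ℝ) * trigS N (2*(r:ℤ)-m+1)) / 2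
        + (∑ r ∈ Finset.range (m+1), (Nat.choose m r : ℝ) * trigS N ((m:ℤ)+1-2*r)) / 2 := by
        rw [Finset.sum_div, Finset.sum_div, ← Finset.sum_add_distrib]
        refine Finset.sum_congr rfl fun r _ => ?_
        ring
    _ = N * ((Nat.choose m k : ℝ) - (Nat.choose m (k+N) : ℝ)) := by
        rw [hrefl, heval]
        ring

lemma catalan_conv (N k : ℕ) (hN : 1 ≤ N) :
    (∑ j ∈ Finset.Nat.antidiagonalTuple N k, ∏ i : Fin N, catalan (j i))
      + (N+2*k-1).choose (k+N) = (N+2*k-1).choose k := by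
  obtain ⟨M, rfl⟩ : ∃ M, N = M + 1 := ⟨N-1, by omega⟩
  have e1 : M+1+2*k-1 = M+2*k := by omega
  have e2 : k+(M+1) = k+M+1 := by omega
  have h := key_choose k M
  rw [coeff_catPS_pow] at h
  rw [e1, e2]
  exact h

/-- For `0 ≤ k ≤ N-1`, `2^{N+2k-1} p_{N+2k}^{(N)}` equals the `k`-th term of the
`N`-th convolution power of the Catalan sequence. -/
theorem two_pow_mul_probNum_eq_catalan_convolution (N k : ℕ) (hN : 2 ≤ N)
    (hk : k ≤ N - 1) :
    (2 : ℝ) ^ (N + 2 * k - 1) * probNum N (N + 2 * k) =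
      ∑ j ∈ Finset.Nat.antidiagonalTuple N k, ∏ i : Fin N, (catalan (j i) : ℝ) := by
  have hm0 : N + 2*k ≠ 0 := by omega
  rw [probNum, if_neg hm0]
  have hN0 : (N:ℝ) ≠ 0 := Nat.cast_ne_zero.mpr (by omega)
  have htrig := trig_main N k hN hk
  have hcc := catalan_conv N k (by omega)
  have hrhs : (∑ j ∈ Finset.Nat.antidiagonalTuple N k, ∏ i : Fin N, (catalan (j i) : ℝ))
      = ((∑ j ∈ Finset.Nat.antidiagonalTuple N k, ∏ i : Fin N, catalan (j i) : ℕ) : ℝ) := by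
    push_cast
    rfl
  have hcast : ((∑ j ∈ Finset.Nat.antidiagonalTuple N k, ∏ i : Fin N, catalan (j i) : ℕ) : ℝ)
      + ((N+2*k-1).choose (k+N) : ℝ) = ((N+2*k-1).choose k : ℝ) := by
    exact_mod_cast congrArg (fun n : ℕ => (n:ℝ)) hcc
  rw [hrhs]
  have hL : (2:ℝ) ^ (N + 2*k - 1) * ((1 / N) * ∑ j ∈ Finset.range N,
      (-1 : ℝ) ^ j * Real.sin ((2 * j + 1) * Real.pi / (2 * N)) *
        Real.cos ((2 * j + 1) * Real.pi / (2 * N)) ^ (N + 2*k - 1))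
      = (1/N) * ((2:ℝ) ^ (N + 2*k - 1) * ∑ j ∈ Finset.range N,
      (-1 : ℝ) ^ j * Real.sin ((2 * j + 1) * Real.pi / (2 * N)) *
        Real.cos ((2 * j + 1) * Real.pi / (2 * N)) ^ (N + 2*k - 1)) := by ring
  rw [hL, htrig]
  field_simp
  linarith [hcast]
end

section
/- For N = 4, the probability numbers are: p_ℓ^{(4)} = 0 when ℓ is odd or ℓ ∈ {0, 2}, and for every integer m ≥ 2, p_{2m}^{(4)} = √2 · [ (2 + √2)^{m−1} − (2 − √2)^{m−1} ] / 2^{2m+1}. -/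
open Real in
/-- Auxiliary: the defining sum for `N = 4` reduces to an expression in `sin (π/8)`
and `cos (π/8)`. -/
lemma probNum_four_expand (ℓ : ℕ) (h : ℓ ≠ 0) :
    probNum 4 ℓ = (1/4) * (sin (π/8) * cos (π/8) ^ (ℓ-1)
      - cos (π/8) * sin (π/8) ^ (ℓ-1)
      + cos (π/8) * (-sin (π/8)) ^ (ℓ-1)
      - sin (π/8) * (-cos (π/8)) ^ (ℓ-1)) := by
  have h38s : sin (3*π/8) = cos (π/8) := by
    rw [← Real.cos_pi_div_two_sub]; ring_nf
  have h38c : cos (3*π/8) = sin (π/8) := by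
    rw [← Real.sin_pi_div_two_sub]; ring_nf
  have h58s : sin (5*π/8) = cos (π/8) := by
    rw [show (5*π/8 : ℝ) = π - 3*π/8 by ring, Real.sin_pi_sub, h38s]
  have h58c : cos (5*π/8) = -sin (π/8) := by
    rw [show (5*π/8 : ℝ) = π - 3*π/8 by ring, Real.cos_pi_sub, h38c]
  have h78s : sin (7*π/8) = sin (π/8) := by
    rw [show (7*π/8 : ℝ) = π - π/8 by ring, Real.sin_pi_sub]
  have h78c : cos (7*π/8) = -cos (π/8) := by
    rw [show (7*π/8 : ℝ) = π - π/8 by ring, Real.cos_pi_sub]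
  rw [probNum, if_neg h]
  rw [show (4:ℕ) = 3+1 from rfl, Finset.sum_range_succ, Finset.sum_range_succ,
    Finset.sum_range_succ, Finset.sum_range_succ, Finset.sum_range_zero]
  push_cast
  norm_num
  simp only [h38s, h38c, h58s, h58c, h78s, h78c, Real.sin_pi_div_eight,
    Real.cos_pi_div_eight]
  ring

open Real in
/-- The probability numbers for `N = 4`: `p_ℓ^{(4)} = 0` for `ℓ` odd or `ℓ ∈ {0,2}`, and
`p_{2m}^{(4)} = √2 ((2+√2)^{m-1} - (2-√2)^{m-1}) / 2^{2m+1}` for `m ≥ 2`. -/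
theorem probNum_four :
    (∀ ℓ : ℕ, (Odd ℓ ∨ ℓ = 0 ∨ ℓ = 2) → probNum 4 ℓ = 0) ∧
    (∀ m : ℕ, 2 ≤ m → probNum 4 (2 * m) =
      Real.sqrt 2 * ((2 + Real.sqrt 2) ^ (m - 1) - (2 - Real.sqrt 2) ^ (m - 1)) /
        2 ^ (2 * m + 1)) := by
  have hsqrt2 : Real.sqrt 2 ^ 2 = 2 := Real.sq_sqrt (by norm_num)
  have hsqrt2le : Real.sqrt 2 ≤ 2 := by
    nlinarith [Real.sqrt_nonneg 2]
  have hcsq : cos (π/8) ^ 2 = (2 + Real.sqrt 2) / 4 := by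
    rw [Real.cos_pi_div_eight, div_pow, Real.sq_sqrt (by positivity)]
    norm_num
  have hssq : sin (π/8) ^ 2 = (2 - Real.sqrt 2) / 4 := by
    rw [Real.sin_pi_div_eight, div_pow, Real.sq_sqrt (by linarith)]
    norm_num
  have hsc : sin (π/8) * cos (π/8) = Real.sqrt 2 / 4 := by
    have h := Real.sin_two_mul (π/8)
    rw [show 2*(π/8) = π/4 by ring, Real.sin_pi_div_four] at h
    linarith
  constructor
  · rintro ℓ (⟨j, rfl⟩ | rfl | rfl)
    · rw [probNum_four_expand (2*j+1) (by omega), show 2*j+1-1 = 2*j by omega,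
        Even.neg_pow (even_two_mul j), Even.neg_pow (even_two_mul j)]
      ring
    · rw [probNum, if_pos rfl]
    · rw [probNum_four_expand 2 (by omega)]
      norm_num
      ring
  · intro m hm
    obtain ⟨k, rfl⟩ : ∃ k, m = k + 2 := ⟨m - 2, by omega⟩
    rw [probNum_four_expand (2*(k+2)) (by omega), show 2*(k+2)-1 = 2*(k+1)+1 by omega,
      show (k+2)-1 = k+1 by omega,
      Odd.neg_pow (by exact ⟨k+1, by ring⟩), Odd.neg_pow (by exact ⟨k+1, by ring⟩)]
    have hrw : ∀ x : ℝ, x ^ (2*(k+1)+1) = (x^2)^(k+1) * x := by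
      intro x; rw [pow_succ, pow_mul]
    rw [hrw, hrw, show (1:ℝ)/4 * (sin (π/8) * ((cos (π/8)^2)^(k+1) * cos (π/8))
        - cos (π/8) * ((sin (π/8)^2)^(k+1) * sin (π/8))
        + cos (π/8) * -((sin (π/8)^2)^(k+1) * sin (π/8))
        - sin (π/8) * -((cos (π/8)^2)^(k+1) * cos (π/8)))
      = (sin (π/8) * cos (π/8)) / 2 * ((cos (π/8)^2)^(k+1) - (sin (π/8)^2)^(k+1)) by ring,
      hsc, hcsq, hssq, div_pow, div_pow]
    have h4 : ((4:ℝ))^(k+1) ≠ 0 := by positivity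
    have h2pow : (2:ℝ)^(2*(k+2)+1) = 32 * 4^k := by
      rw [show 2*(k+2)+1 = 2*k+5 by ring, pow_add, pow_mul]; norm_num; ring
    rw [h2pow, show ((4:ℝ))^(k+1) = 4 * 4^k by rw [pow_succ]; ring]
    ring
end
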